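/- arXiv:1310.5535 — 5 statements merged into one kernel-verified Lean document; each statement's English description precedes it below -/
import Mathlib

section
/- Let β > 0 and 0 < ε < 1. Then for all sufficiently large positive integers Q and every positive integer q with q ≤ Q, the number of integers n with 1 ≤ n ≤ βQ and gcd(n, q) = 1 is at least (1 - ε)·βQ·φ(q)/q, where φ is Euler's totient function. -/
open Finset ArithmeticFunction
open scoped ArithmeticFunction.Moebius


lemma mu_sum (n : ℕ) :
    ∑ d ∈ n.divisors, μ d = if n = 1 then 1 else 0 := by
  have h := congrArg (fun f : ArithmeticFunction ℤ => f n) moebius_mul_coe_zeta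
  simp only [coe_mul_zeta_apply, one_apply] at h
  exact h

lemma legendre (N q : ℕ) (hq : q ≠ 0) :
    ((((Finset.Icc 1 N).filter fun n => Nat.gcd n q = 1).card : ℤ)) =
      ∑ d ∈ q.divisors, μ d * ((N / d : ℕ) : ℤ) := by
  have hIcc : Finset.Icc 1 N = Finset.Ioc 0 N := rfl
  have h1 : ∀ n ∈ Finset.Ioc 0 N, (if Nat.gcd n q = 1 then (1:ℤ) else 0)
      = ∑ d ∈ q.divisors.filter (· ∣ n), μ d := by
    intro n hn
    have hn0 : 0 < n := (Finset.mem_Ioc.mp hn).1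
    have hdiv : (Nat.gcd n q).divisors = q.divisors.filter (· ∣ n) := by
      ext d
      simp only [Nat.mem_divisors, Finset.mem_filter, Nat.dvd_gcd_iff]
      constructor
      · rintro ⟨⟨h1, h2⟩, _⟩; exact ⟨⟨h2, hq⟩, h1⟩
      · rintro ⟨⟨h2, _⟩, h1⟩
        exact ⟨⟨h1, h2⟩, Nat.gcd_ne_zero_left hn0.ne'⟩
    rw [← hdiv, mu_sum]
  calc ((((Finset.Icc 1 N).filter fun n => Nat.gcd n q = 1).card : ℤ))
      = ∑ n ∈ Finset.Ioc 0 N, if Nat.gcd n q = 1 then (1:ℤ) else 0 := by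
        rw [hIcc, Finset.card_filter]
        push_cast
        rfl
    _ = ∑ n ∈ Finset.Ioc 0 N, ∑ d ∈ q.divisors.filter (· ∣ n), μ d :=
        Finset.sum_congr rfl h1
    _ = ∑ n ∈ Finset.Ioc 0 N, ∑ d ∈ q.divisors, if d ∣ n then μ d else 0 := by
        simp [Finset.sum_filter]
    _ = ∑ d ∈ q.divisors, ∑ n ∈ Finset.Ioc 0 N, if d ∣ n then μ d else 0 :=
        Finset.sum_comm
    _ = ∑ d ∈ q.divisors, μ d * ((N / d : ℕ) : ℤ) := by
        refine Finset.sum_congr rfl fun d _ => ?_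
        rw [← Finset.sum_filter, Finset.sum_const, Nat.Ioc_filter_dvd_card_eq_div,
          nsmul_eq_mul, mul_comm]

lemma card_Icc_coprime (r : ℕ) :
    ((Finset.Icc 1 r).filter fun n => Nat.gcd n r = 1).card = Nat.totient r := by
  have h := Nat.filter_coprime_Ico_eq_totient r 1
  rw [← h]
  congr 1
  rw [show 1 + r = r + 1 by ring, Finset.Ico_add_one_right_eq_Icc]
  apply Finset.filter_congr
  intro x _
  simp [Nat.Coprime, Nat.gcd_comm]

lemma mu_sum_totient (r : ℕ) (hr : r ≠ 0) :
    ∑ d ∈ r.divisors, μ d * ((r / d : ℕ) : ℤ) = (Nat.totient r : ℤ) := by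
  rw [← legendre r r hr, card_Icc_coprime]

lemma mu_real_sum (N r : ℕ) (hr : r ≠ 0) :
    ∑ d ∈ r.divisors, (μ d : ℝ) * ((N : ℝ) / d) = (N : ℝ) * r.totient / r := by
  have hr0 : (r : ℝ) ≠ 0 := Nat.cast_ne_zero.mpr hr
  have h : ∀ d ∈ r.divisors, (μ d : ℝ) * ((N:ℝ)/d)
      = (N:ℝ)/r * ((μ d : ℝ) * ((r/d : ℕ):ℝ)) := by
    intro d hd
    obtain ⟨hdvd, -⟩ := Nat.mem_divisors.mp hd
    have hd0 : (d:ℝ) ≠ 0 := Nat.cast_ne_zero.mpr (Nat.pos_of_mem_divisors hd).ne'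
    have hcast : ((r/d : ℕ):ℝ) = (r:ℝ)/d := Nat.cast_div hdvd hd0
    rw [hcast]
    field_simp
  rw [Finset.sum_congr rfl h, ← Finset.mul_sum]
  have h2 : ∑ d ∈ r.divisors, (μ d : ℝ) * ((r/d : ℕ):ℝ) = (r.totient : ℝ) := by
    have h3 : ((∑ d ∈ r.divisors, μ d * ((r / d : ℕ) : ℤ) : ℤ) : ℝ)
        = (((Nat.totient r : ℤ)) : ℝ) := by rw [mu_sum_totient r hr]
    push_cast at h3
    exact h3
  rw [h2]
  ring

lemma count_lower (N r : ℕ) (hr : Squarefree r) :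
    (N : ℝ) * r.totient / r - r.divisors.card ≤
      (((Finset.Icc 1 N).filter fun n => Nat.gcd n r = 1).card : ℝ) := by
  have hr0 : r ≠ 0 := hr.ne_zero
  have hL : ((((Finset.Icc 1 N).filter fun n => Nat.gcd n r = 1).card : ℝ))
      = ∑ d ∈ r.divisors, (μ d : ℝ) * ((N / d : ℕ) : ℝ) := by
    have h3 : (((((Finset.Icc 1 N).filter fun n => Nat.gcd n r = 1).card : ℤ)) : ℝ)
        = ((∑ d ∈ r.divisors, μ d * ((N / d : ℕ) : ℤ) : ℤ) : ℝ) := by rw [legendre N r hr0]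
    push_cast at h3
    exact h3
  rw [hL, ← mu_real_sum N r hr0]
  have hc : (r.divisors.card : ℝ) = ∑ _d ∈ r.divisors, (1:ℝ) := by simp
  rw [hc, ← Finset.sum_sub_distrib]
  apply Finset.sum_le_sum
  intro d hd
  obtain ⟨hdvd, -⟩ := Nat.mem_divisors.mp hd
  have hd0 : 0 < d := Nat.pos_of_mem_divisors hd
  have hdR : (0:ℝ) < d := by exact_mod_cast hd0
  have hub : ((N/d : ℕ):ℝ) ≤ (N:ℝ)/d := Nat.cast_div_le
  have hfl : ((N/d : ℕ):ℝ) = (⌊(N:ℝ)/(d:ℝ)⌋₊ : ℝ) := by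
    rw [Nat.floor_div_natCast, Nat.floor_natCast]
  have hlb : (N:ℝ)/d - 1 < ((N/d:ℕ):ℝ) := by
    rw [hfl]
    have := Nat.lt_floor_add_one ((N:ℝ)/d)
    linarith
  have hmu : μ d = 1 ∨ μ d = -1 :=
    moebius_ne_zero_iff_eq_or.mp
      (moebius_ne_zero_iff_squarefree.mpr (hr.squarefree_of_dvd hdvd))
  rcases hmu with h|h <;> rw [h] <;> push_cast <;> nlinarith
lemma totient_squarefree (r : ℕ) (hr : Squarefree r) :
    Nat.totient r = ∏ p ∈ r.primeFactors, (p - 1) := by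
  have h := Nat.totient_eq_div_primeFactors_mul r
  rwa [Nat.prod_primeFactors_of_squarefree hr, Nat.div_self hr.ne_zero.bot_lt, one_mul] at h

lemma card_divisors_le (r : ℕ) (hr : Squarefree r) :
    r.divisors.card ≤ 2 ^ r.primeFactors.card := by
  rw [Nat.card_divisors hr.ne_zero]
  exact Finset.prod_le_pow_card _ _ _ fun p _ => by
    have := hr.natFactorization_le_one p; omega

lemma exists_K (C : ℕ) : ∃ K : ℕ, 2 ≤ K ∧ ∀ r : ℕ, K ≤ r → Squarefree r →
    C * (1 + r.divisors.card) ≤ r.totient := by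
  set M := C + 8 with hM
  refine ⟨(C * 2 ^ M + 2) ^ M + 2, Nat.le_add_left 2 _, ?_⟩
  intro r hK hr
  have hr2 : 2 ≤ r := by
    have := Nat.zero_le ((C * 2 ^ M + 2) ^ M)
    omega
  set m := r.primeFactors.card with hm
  have hφ := totient_squarefree r hr
  have hd := card_divisors_le r hr
  rw [← hm] at hd
  have hsuff : C * (1 + 2 ^ m) ≤ r.totient → C * (1 + r.divisors.card) ≤ r.totient := by
    intro h
    calc C * (1 + r.divisors.card) ≤ C * (1 + 2 ^ m) := by
          exact Nat.mul_le_mul_left C (by omega)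
      _ ≤ r.totient := h
  apply hsuff
  have h2m : C * (1 + 2 ^ m) ≤ C * 2 ^ (m + 1) := by
    have : 1 ≤ 2 ^ m := Nat.one_le_two_pow
    rw [pow_succ]
    exact Nat.mul_le_mul_left C (by omega)
  by_cases hcase : M ≤ m
  · -- many primes
    have h4 : 4 ^ (m - 3) ≤ r.totient := by
      rw [hφ]
      have hsub : r.primeFactors.filter (fun p => 5 ≤ p) ⊆ r.primeFactors :=
        Finset.filter_subset _ _
      have hstep : (4 : ℕ) ^ (r.primeFactors.filter (fun p => 5 ≤ p)).card
          ≤ ∏ p ∈ r.primeFactors.filter (fun p => 5 ≤ p), (p - 1) := by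
        rw [← Finset.prod_const]
        apply Finset.prod_le_prod'
        intro p hp
        have := (Finset.mem_filter.mp hp).2
        omega
      have hcard : m - 3 ≤ (r.primeFactors.filter (fun p => 5 ≤ p)).card := by
        have hsplit : r.primeFactors.filter (fun p => ¬ 5 ≤ p) ⊆ Finset.Ico 2 5 := by
          intro p hp
          obtain ⟨hp1, hp2⟩ := Finset.mem_filter.mp hp
          have := (Nat.prime_of_mem_primeFactors hp1).two_le
          simp only [Finset.mem_Ico]
          omega
        have h3 : (r.primeFactors.filter (fun p => ¬ 5 ≤ p)).card ≤ 3 := by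
          have := Finset.card_le_card hsplit
          simpa using this
        have := Finset.card_filter_add_card_filter_not
          (s := r.primeFactors) (p := fun p => 5 ≤ p)
        omega
      calc (4:ℕ) ^ (m - 3) ≤ 4 ^ (r.primeFactors.filter (fun p => 5 ≤ p)).card :=
            Nat.pow_le_pow_right (by norm_num) hcard
        _ ≤ ∏ p ∈ r.primeFactors.filter (fun p => 5 ≤ p), (p - 1) := hstep
        _ ≤ ∏ p ∈ r.primeFactors, (p - 1) := by
            apply Finset.prod_le_prod_of_subset_of_one_le' hsub
            intro p hp _
            have := (Nat.prime_of_mem_primeFactors hp).two_le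
            omega
    refine le_trans h2m (le_trans ?_ h4)
    calc C * 2 ^ (m + 1) ≤ 2 ^ C * 2 ^ (m + 1) :=
          Nat.mul_le_mul_right _ (Nat.lt_two_pow_self (n := C)).le
      _ = 2 ^ (C + m + 1) := by rw [← pow_add]; ring_nf
      _ ≤ 2 ^ (2 * (m - 3)) := Nat.pow_le_pow_right (by norm_num) (by omega)
      _ = 4 ^ (m - 3) := by rw [pow_mul]; norm_num
  · -- few primes, so a big prime
    push_neg at hcase
    have hne : r.primeFactors.Nonempty := Nat.nonempty_primeFactors.mpr (by omega)
    set P := r.primeFactors.max' hne with hP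
    have hPmem : P ∈ r.primeFactors := Finset.max'_mem _ _
    have hrP : r ≤ P ^ m := by
      have h1 : r = ∏ p ∈ r.primeFactors, p := (Nat.prod_primeFactors_of_squarefree hr).symm
      rw [h1]
      exact Finset.prod_le_pow_card _ _ _ fun p hp => Finset.le_max' _ p hp
    have hPbig : C * 2 ^ M + 2 ≤ P := by
      by_contra hcon
      push_neg at hcon
      have : P ^ m ≤ (C * 2 ^ M + 1) ^ M := by
        calc P ^ m ≤ (C * 2 ^ M + 1) ^ m := Nat.pow_le_pow_left (by omega) m
          _ ≤ (C * 2 ^ M + 1) ^ M := Nat.pow_le_pow_right (by omega) (by omega)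
      have hlt : (C * 2 ^ M + 1) ^ M < (C * 2 ^ M + 2) ^ M := by
        apply Nat.pow_lt_pow_left (by omega)
        omega
      omega
    have hφP : P - 1 ≤ r.totient := by
      rw [hφ]
      apply Finset.single_le_prod' (f := fun p => p - 1) (fun p hp => ?_) hPmem
      have := (Nat.prime_of_mem_primeFactors hp).two_le
      omega
    refine le_trans h2m (le_trans ?_ hφP)
    calc C * 2 ^ (m + 1) ≤ C * 2 ^ M := Nat.mul_le_mul_left C
          (Nat.pow_le_pow_right (by norm_num) (by omega))
      _ ≤ P - 1 := by omega
lemma squarefree_prod_primes {s : Finset ℕ} (hs : ∀ p ∈ s, p.Prime) :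
    Squarefree (∏ p ∈ s, p) := by
  induction s using Finset.induction_on with
  | empty => simpa using squarefree_one
  | @insert a s ha ih =>
    rw [Finset.prod_insert ha]
    have hcop : Nat.Coprime a (∏ p ∈ s, p) := by
      rw [Nat.coprime_prod_right_iff]
      intro b hb
      exact (Nat.coprime_primes (hs a (Finset.mem_insert_self a s))
        (hs b (Finset.mem_insert_of_mem hb))).mpr (by rintro rfl; exact ha hb)
    rw [Nat.squarefree_mul hcop]
    exact ⟨(hs a (Finset.mem_insert_self a s)).squarefree,
      ih fun p hp => hs p (Finset.mem_insert_of_mem hp)⟩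

lemma coprime_radical_iff (n q : ℕ) (hq : q ≠ 0) :
    Nat.gcd n q = 1 ↔ Nat.gcd n (∏ p ∈ q.primeFactors, p) = 1 := by
  have h1 : Nat.Coprime n q ↔ ∀ p ∈ q.primeFactors, Nat.Coprime n p := by
    constructor
    · intro h p hp
      exact Nat.Coprime.coprime_dvd_right (Nat.dvd_of_mem_primeFactors hp) h
    · intro h
      by_contra hcon
      obtain ⟨p, hp, hpd⟩ := Nat.exists_prime_and_dvd hcon
      have hpn : p ∣ n := hpd.trans (Nat.gcd_dvd_left n q)
      have hpq : p ∣ q := hpd.trans (Nat.gcd_dvd_right n q)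
      have := h p (Nat.mem_primeFactors.mpr ⟨hp, hpq, hq⟩)
      have : p ∣ 1 := this ▸ Nat.dvd_gcd hpn dvd_rfl
      exact hp.one_lt.ne' (Nat.dvd_one.mp this)
  have h2 : Nat.Coprime n (∏ p ∈ q.primeFactors, p) ↔
      ∀ p ∈ q.primeFactors, Nat.Coprime n p := Nat.coprime_prod_right_iff
  rw [show (Nat.gcd n q = 1) = Nat.Coprime n q from rfl]
  rw [show (Nat.gcd n (∏ p ∈ q.primeFactors, p) = 1)
      = Nat.Coprime n (∏ p ∈ q.primeFactors, p) from rfl]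
  rw [h1, h2]

lemma totient_radical_ratio (q : ℕ) (hq : q ≠ 0) :
    (Nat.totient q : ℚ) * (∏ p ∈ q.primeFactors, p)
      = Nat.totient (∏ p ∈ q.primeFactors, p) * q := by
  have hPF : (∏ p ∈ q.primeFactors, p).primeFactors = q.primeFactors :=
    Nat.primeFactors_prod fun p hp => Nat.prime_of_mem_primeFactors hp
  rw [Nat.totient_eq_mul_prod_factors q, Nat.totient_eq_mul_prod_factors
    (∏ p ∈ q.primeFactors, p), hPF]
  ring

/-- For β > 0 and 0 < ε < 1, for all sufficiently large Q and every 1 ≤ q ≤ Q,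
the number of integers n with 1 ≤ n ≤ βQ coprime to q is at least (1-ε)βQ·φ(q)/q. -/
theorem stmt0 (β ε : ℝ) (hβ : 0 < β) (hε0 : 0 < ε) (hε1 : ε < 1) :
    ∃ Q₀ : ℕ, ∀ Q : ℕ, Q₀ ≤ Q → ∀ q : ℕ, 1 ≤ q → q ≤ Q →
      (1 - ε) * β * Q * (Nat.totient q : ℝ) / q ≤
        (((Finset.Icc 1 ⌊β * (Q : ℝ)⌋₊).filter fun n => Nat.gcd n q = 1).card : ℝ) := by
  have hεβ : 0 < ε * β := mul_pos hε0 hβ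
  set C : ℕ := ⌈1/(ε*β)⌉₊ + 1 with hC
  obtain ⟨K, hK2, hKprop⟩ := exists_K C
  have hCinv : 1 ≤ ε * β * C := by
    have h1 : 1/(ε*β) ≤ (C : ℝ) := by
      rw [hC]; push_cast
      have := Nat.le_ceil (1/(ε*β))
      linarith
    calc (1:ℝ) = (ε*β) * (1/(ε*β)) := by field_simp
      _ ≤ ε * β * C := by
          apply mul_le_mul_of_nonneg_left h1 hεβ.le
  refine ⟨⌈((K:ℝ)*K)/(ε*β)⌉₊ + 1, ?_⟩
  intro Q hQ q hq1 hqQ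
  have hQK : (K:ℝ)*K ≤ ε * β * Q := by
    have h1 : ((K:ℝ)*K)/(ε*β) ≤ (Q:ℝ) := by
      have := Nat.le_ceil (((K:ℝ)*K)/(ε*β))
      have h2 : ((⌈((K:ℝ)*K)/(ε*β)⌉₊ : ℝ)) ≤ ((⌈((K:ℝ)*K)/(ε*β)⌉₊ + 1 : ℕ) : ℝ) := by
        push_cast; linarith
      have h3 : ((⌈((K:ℝ)*K)/(ε*β)⌉₊ + 1 : ℕ) : ℝ) ≤ (Q:ℝ) := by exact_mod_cast hQ
      linarith
    calc (K:ℝ)*K = (ε*β) * (((K:ℝ)*K)/(ε*β)) := by field_simp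
      _ ≤ (ε*β) * Q := by apply mul_le_mul_of_nonneg_left h1 hεβ.le
  set x : ℝ := β * (Q:ℝ) with hx
  set N : ℕ := ⌊x⌋₊ with hN
  set r : ℕ := ∏ p ∈ q.primeFactors, p with hr
  have hq0 : q ≠ 0 := by omega
  have hsqf : Squarefree r := squarefree_prod_primes fun p hp => Nat.prime_of_mem_primeFactors hp
  have hr0 : r ≠ 0 := hsqf.ne_zero
  have hr1 : 1 ≤ r := Nat.one_le_iff_ne_zero.mpr hr0
  have hrq : r ≤ q := Nat.le_of_dvd (by omega) (Nat.prod_primeFactors_dvd q)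
  have hfilter : (Finset.Icc 1 N).filter (fun n => Nat.gcd n q = 1)
      = (Finset.Icc 1 N).filter (fun n => Nat.gcd n r = 1) := by
    apply Finset.filter_congr
    intro n _
    exact coprime_radical_iff n q hq0
  have hratio : (Nat.totient q : ℝ) / q = (Nat.totient r : ℝ) / r := by
    have hNat : Nat.totient q * r = Nat.totient r * q := by
      exact_mod_cast totient_radical_ratio q hq0
    rw [div_eq_div_iff (Nat.cast_ne_zero.mpr hq0) (Nat.cast_ne_zero.mpr hr0)]
    exact_mod_cast hNat
  set t : ℝ := (Nat.totient r : ℝ) / r with ht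
  have ht0 : 0 ≤ t := by positivity
  have ht1 : t ≤ 1 := by
    rw [ht, div_le_one (by exact_mod_cast Nat.pos_of_ne_zero hr0)]
    exact_mod_cast Nat.totient_le r
  have htr : 1 ≤ t * r := by
    rw [ht, div_mul_cancel₀ _ (Nat.cast_ne_zero.mpr hr0)]
    exact_mod_cast Nat.totient_pos.mpr (Nat.pos_of_ne_zero hr0)
  -- key inequality
  have hkey : 1 + (r.divisors.card : ℝ) ≤ ε * x * t := by
    rcases le_or_gt K r with hcase | hcase
    · -- large radical
      have h1 : (C:ℝ) * (1 + r.divisors.card) ≤ Nat.totient r := by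
        exact_mod_cast hKprop r hcase hsqf
      have hC0 : (0:ℝ) < C := by rw [hC]; push_cast; positivity
      have h2 : 1 + (r.divisors.card : ℝ) ≤ (Nat.totient r : ℝ) / C := by
        rw [le_div_iff₀ hC0]; linarith [h1]
      have h3 : (Nat.totient r : ℝ) / C ≤ ε * β * Nat.totient r := by
        rw [div_le_iff₀ hC0]
        calc (Nat.totient r : ℝ) = Nat.totient r * 1 := by ring
          _ ≤ Nat.totient r * (ε * β * C) := by
              apply mul_le_mul_of_nonneg_left hCinv (by positivity)
          _ = ε * β * Nat.totient r * C := by ring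
      have h4 : ε * β * Nat.totient r = ε * β * (t * r) := by
        rw [ht]; field_simp
      have h5 : ε * β * (t * r) ≤ ε * β * (t * Q) := by
        apply mul_le_mul_of_nonneg_left _ hεβ.le
        apply mul_le_mul_of_nonneg_left _ ht0
        exact_mod_cast hrq.trans hqQ
      have h6 : ε * β * (t * Q) = ε * x * t := by rw [hx]; ring
      linarith
    · -- small radical
      have hd : r.divisors.card ≤ r := by
        have hsub : r.divisors ⊆ Finset.Icc 1 r := by
          intro d hd
          rw [Finset.mem_Icc]
          exact ⟨Nat.pos_of_mem_divisors hd, Nat.le_of_dvd (Nat.pos_of_ne_zero hr0)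
            (Nat.dvd_of_mem_divisors hd)⟩
        calc r.divisors.card ≤ (Finset.Icc 1 r).card := Finset.card_le_card hsub
          _ = r := by rw [Nat.card_Icc]; omega
      have h1 : 1 + (r.divisors.card : ℝ) ≤ (K : ℝ) := by
        have : 1 + r.divisors.card ≤ K := by omega
        exact_mod_cast this
      have h2 : (K:ℝ) * K ≤ ε * x * (t * K) := by
        calc (K:ℝ) * K ≤ ε * β * Q := hQK
          _ = ε * x := by rw [hx]; ring
          _ ≤ ε * x * (t * r) := by
              nth_rewrite 1 [show ε * x = ε * x * 1 by ring]
              apply mul_le_mul_of_nonneg_left htr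
              positivity
          _ ≤ ε * x * (t * K) := by
              apply mul_le_mul_of_nonneg_left _ (by positivity)
              apply mul_le_mul_of_nonneg_left _ ht0
              exact_mod_cast hcase.le
      have hKpos : (0:ℝ) < K := by exact_mod_cast (by omega : 0 < K)
      have h3 : (K:ℝ) ≤ ε * x * t := by
        have := mul_le_mul_of_nonneg_right h2 (le_of_lt (inv_pos.mpr hKpos))
        calc (K:ℝ) = (K:ℝ) * K * (K:ℝ)⁻¹ := by field_simp
          _ ≤ ε * x * (t * K) * (K:ℝ)⁻¹ := this
          _ = ε * x * t * ((K:ℝ) * (K:ℝ)⁻¹) := by ring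
          _ = ε * x * t := by rw [mul_inv_cancel₀ hKpos.ne', mul_one]
      linarith
  -- conclude
  have hcount := count_lower N r hsqf
  rw [hfilter]
  have hxN : x ≤ N + 1 := by
    have := Nat.lt_floor_add_one x
    rw [hN]; push_cast; linarith
  have hgoal : (1 - ε) * β * Q * (Nat.totient q : ℝ) / q = (1 - ε) * x * t := by
    rw [show (1 - ε) * β * (Q:ℝ) * (Nat.totient q : ℝ) / q
        = (1 - ε) * (β * Q) * ((Nat.totient q : ℝ) / q) by ring, hratio, ← hx]
  rw [hgoal]
  have hNt : (N:ℝ) * Nat.totient r / r = N * t := by rw [ht]; ring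
  rw [hNt] at hcount
  have hfinal : (1 - ε) * x * t ≤ (N:ℝ) * t - r.divisors.card := by
    have hxt : x * t ≤ (N:ℝ) * t + 1 := by
      have := mul_le_mul_of_nonneg_right hxN ht0
      nlinarith
    nlinarith
  linarith
end

section
/- Let m, n ∈ ℕ, ψ : ℕ → (0, 1/2), y ∈ ℝ^n. Let q, q' ∈ ℤ^m be linearly independent over ℝ. With F_q(y) = {Θ ∈ Mat_{n,m}(ℝ) : ‖Θq - y‖ ≤ ψ(|q|)} and 𝕀 = {Θ : |Θ| ≤ 1/2}, the Lebesgue measure of F_q(y) ∩ F_{q'}(y) ∩ 𝕀 equals 4^n ψ(|q|)^n ψ(|q'|)^n. -/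
open MeasureTheory MeasureTheory.Measure Set
open scoped ENNReal



theorem surjL (m : ℕ) (q q' : Fin m → ℤ)
    (hind : LinearIndependent ℝ ![(fun j => (q j : ℝ)), (fun j => (q' j : ℝ))]) :
    Function.Surjective (fun θ : Fin m → ℝ => ((∑ j, θ j * q j, ∑ j, θ j * q' j) : ℝ × ℝ)) := by
  have hpair := LinearIndependent.pair_iff.mp (by simpa [LinearIndependent.pair_iff] using hind)
  have key : ∀ a b : ℝ, ∑ j, (a * (q' j : ℝ) - b * q j) ^ 2 =
      a ^ 2 * (∑ j, (q' j : ℝ) * q' j) - 2 * a * b * (∑ j, (q j : ℝ) * q' j)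
        + b ^ 2 * (∑ j, (q j : ℝ) * q j) := by
    intro a b
    simp only [Finset.mul_sum, ← Finset.sum_add_distrib, ← Finset.sum_sub_distrib]
    exact Finset.sum_congr rfl fun j _ => by ring
  have dot : ∀ a b : ℝ, (∑ j, (a * (q j : ℝ) + b * q' j) * q j) =
      a * (∑ j, (q j : ℝ) * q j) + b * (∑ j, (q j : ℝ) * q' j) := by
    intro a b
    simp only [Finset.mul_sum, ← Finset.sum_add_distrib]
    exact Finset.sum_congr rfl fun j _ => by ring
  have dot' : ∀ a b : ℝ, (∑ j, (a * (q j : ℝ) + b * q' j) * q' j) =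
      a * (∑ j, (q j : ℝ) * q' j) + b * (∑ j, (q' j : ℝ) * q' j) := by
    intro a b
    simp only [Finset.mul_sum, ← Finset.sum_add_distrib]
    exact Finset.sum_congr rfl fun j _ => by ring
  obtain ⟨A, hA_def⟩ : ∃ A : ℝ, A = ∑ j, (q j : ℝ) * q j := ⟨_, rfl⟩
  obtain ⟨B, hB_def⟩ : ∃ B : ℝ, B = ∑ j, (q' j : ℝ) * q' j := ⟨_, rfl⟩
  obtain ⟨C, hC_def⟩ : ∃ C : ℝ, C = ∑ j, (q j : ℝ) * q' j := ⟨_, rfl⟩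
  simp only [← hA_def, ← hB_def, ← hC_def] at key dot dot'
  have hq0 : (fun j => (q j : ℝ)) ≠ 0 := by simpa using hind.ne_zero 0
  have hA : 0 < A := by
    rcases Function.ne_iff.mp hq0 with ⟨j0, hj0⟩
    have hj0' : (0:ℝ) < (q j0 : ℝ) * q j0 := mul_self_pos.mpr (by simpa using hj0)
    have hle : (q j0 : ℝ) * q j0 ≤ ∑ j, (q j : ℝ) * q j := by
      simpa using Finset.single_le_sum (f := fun j => (q j : ℝ) * q j)
        (fun j _ => mul_self_nonneg _) (Finset.mem_univ j0)
    rw [hA_def]; linarith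
  have hD : A * B - C ^ 2 ≠ 0 := by
    intro hD0
    have hsum : ∑ j, (A * (q' j : ℝ) - C * q j) ^ 2 = 0 := by
      rw [key A C]; nlinarith [hD0]
    have hzero : ∀ j, A * (q' j : ℝ) - C * q j = 0 := fun j =>
      pow_eq_zero_iff (n := 2) (by norm_num) |>.mp
        ((Finset.sum_eq_zero_iff_of_nonneg (fun j _ => sq_nonneg _)).mp hsum j (Finset.mem_univ j))
    have hcomb : ((-C) • (fun j => (q j : ℝ)) + A • (fun j => (q' j : ℝ))) = 0 := by
      funext j
      have := hzero j
      simp only [Pi.add_apply, Pi.smul_apply, smul_eq_mul, Pi.zero_apply]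
      linarith
    exact hA.ne' ((hpair (-C) A hcomb).2)
  rintro ⟨x, y₀⟩
  refine ⟨fun j => ((B * x - C * y₀) / (A * B - C ^ 2)) * q j
    + ((A * y₀ - C * x) / (A * B - C ^ 2)) * q' j, ?_⟩
  simp only [Prod.mk.injEq]
  rw [dot, dot']
  constructor
  · rw [div_mul_eq_mul_div, div_mul_eq_mul_div, ← add_div, div_eq_iff hD]
    ring
  · rw [div_mul_eq_mul_div, div_mul_eq_mul_div, ← add_div, div_eq_iff hD]
    ring

noncomputable def sumHom (m : ℕ) (v : Fin m → ℤ) : (Fin m → AddCircle (1:ℝ)) →+ AddCircle (1:ℝ) :=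
  AddMonoidHom.mk' (fun θ => ∑ j, v j • θ j) (by
    intro a b
    simp only [Pi.add_apply, smul_add]
    rw [Finset.sum_add_distrib])

theorem sumHom_cont (m : ℕ) (v : Fin m → ℤ) : Continuous (sumHom m v) := by
  show Continuous fun θ : Fin m → AddCircle (1:ℝ) => ∑ j, v j • θ j
  refine continuous_finset_sum _ fun j _ => ?_
  exact (continuous_zsmul (v j)).comp (continuous_apply j)

theorem sumHom_coe (m : ℕ) (v : Fin m → ℤ) (θ : Fin m → ℝ) :
    sumHom m v (fun j => (θ j : AddCircle (1:ℝ))) = ((∑ j, θ j * v j : ℝ) : AddCircle (1:ℝ)) := by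
  show (∑ j, v j • ((θ j : AddCircle (1:ℝ)))) = _
  have : ((∑ j, θ j * v j : ℝ) : AddCircle (1:ℝ))
      = (QuotientAddGroup.mk' _) (∑ j, θ j * v j) := rfl
  rw [this, _root_.map_sum]
  refine Finset.sum_congr rfl fun j _ => ?_
  rw [show θ j * v j = v j • θ j by rw [zsmul_eq_mul]; ring, map_zsmul]
  rfl

-- restrict pi
theorem restrict_pi_pi' {ι : Type*} [Fintype ι] (s : ι → Set ℝ) (hs : ∀ i, MeasurableSet (s i)) :
    Measure.pi (fun i => (volume : Measure ℝ).restrict (s i)) = volume.restrict (Set.univ.pi s) := by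
  refine Measure.pi_eq fun t ht => ?_
  rw [Measure.restrict_apply (MeasurableSet.univ_pi ht), ← Set.pi_inter_distrib, volume_pi_pi]
  exact Finset.prod_congr rfl fun i _ => (Measure.restrict_apply (ht i)).symm

theorem exists_int_iff_norm (t ε : ℝ) : (∃ p : ℤ, |t - p| ≤ ε) ↔ ‖(t : AddCircle (1:ℝ))‖ ≤ ε := by
  rw [AddCircle.norm_eq]
  simp only [inv_one, one_mul, mul_one]
  constructor
  · rintro ⟨p, hp⟩; exact le_trans (round_le t p) hp
  · intro h; exact ⟨round t, h⟩

theorem map_G_eq (m : ℕ) (q q' : Fin m → ℤ)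
    (hind : LinearIndependent ℝ ![(fun j => (q j : ℝ)), (fun j => (q' j : ℝ))]) :
    Measure.map ((sumHom m q).prod (sumHom m q')) volume
      = (volume : Measure (AddCircle (1:ℝ) × AddCircle (1:ℝ))) := by
  set G := (sumHom m q).prod (sumHom m q') with hG
  have hcont : Continuous G := (sumHom_cont m q).prodMk (sumHom_cont m q')
  have hsurj : Function.Surjective G := by
    rintro ⟨u, v⟩
    obtain ⟨x, rfl⟩ := QuotientAddGroup.mk_surjective u
    obtain ⟨z, rfl⟩ := QuotientAddGroup.mk_surjective v
    obtain ⟨θ, hθ⟩ := surjL m q q' hind (x, z)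
    refine ⟨fun j => (θ j : AddCircle (1:ℝ)), ?_⟩
    have h1 : (∑ j, θ j * q j : ℝ) = x := congrArg Prod.fst hθ
    have h2 : (∑ j, θ j * q' j : ℝ) = z := congrArg Prod.snd hθ
    show (sumHom m q _, sumHom m q' _) = _
    rw [sumHom_coe, sumHom_coe, h1, h2]
  haveI : IsFiniteMeasure (volume : Measure (Fin m → AddCircle (1:ℝ))) := by
    constructor
    rw [show (univ : Set (Fin m → AddCircle (1:ℝ))) = Set.univ.pi (fun _ => univ) by simp,
      volume_pi_pi]
    simp [AddCircle.measure_univ]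
  haveI : IsAddHaarMeasure (volume : Measure (AddCircle (1:ℝ) × AddCircle (1:ℝ))) := by
    show IsAddHaarMeasure ((volume : Measure (AddCircle (1:ℝ))).prod volume)
    infer_instance
  haveI : IsAddHaarMeasure (Measure.map G volume) :=
    Measure.isAddHaarMeasure_map_of_isFiniteMeasure volume G hcont hsurj
  have huniq := Measure.isAddLeftInvariant_eq_smul (Measure.map G volume)
    (volume : Measure (AddCircle (1:ℝ) × AddCircle (1:ℝ)))
  have hmass : Measure.map G volume univ = 1 := by
    rw [Measure.map_apply hcont.measurable MeasurableSet.univ, preimage_univ,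
      show (univ : Set (Fin m → AddCircle (1:ℝ))) = Set.univ.pi (fun _ => univ) by simp,
      volume_pi_pi]
    simp [AddCircle.measure_univ]
  have hmass2 : (volume : Measure (AddCircle (1:ℝ) × AddCircle (1:ℝ))) univ = 1 := by
    rw [show (univ : Set (AddCircle (1:ℝ) × AddCircle (1:ℝ))) = univ ×ˢ univ by simp,
      show (volume : Measure (AddCircle (1:ℝ) × AddCircle (1:ℝ))) = Measure.prod volume volume from rfl,
      Measure.prod_prod]
    simp [AddCircle.measure_univ]
  have hc : ((Measure.map (⇑G) volume).addHaarScalarFactor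
      (volume : Measure (AddCircle (1:ℝ) × AddCircle (1:ℝ))) : ℝ≥0∞) = 1 := by
    have h := congrArg (fun μ : Measure _ => μ univ) huniq
    simp only [Measure.smul_apply, ENNReal.smul_def, smul_eq_mul] at h
    rw [hmass, hmass2, mul_one] at h
    exact h.symm
  rw [huniq]
  have hc' : (Measure.map (⇑G) volume).addHaarScalarFactor
      (volume : Measure (AddCircle (1:ℝ) × AddCircle (1:ℝ))) = 1 := by
    exact_mod_cast hc
  rw [hc', one_smul]

theorem rowVol (m : ℕ) (q q' : Fin m → ℤ)
    (hind : LinearIndependent ℝ ![(fun j => (q j : ℝ)), (fun j => (q' j : ℝ))])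
    (c ε1 ε2 : ℝ) (h1 : 0 < ε1) (h1' : ε1 < 1/2) (h2 : 0 < ε2) (h2' : ε2 < 1/2) :
    volume {θ : Fin m → ℝ | (∀ j, |θ j| ≤ 1/2) ∧ (∃ p : ℤ, |(∑ j, θ j * q j) - c - p| ≤ ε1)
      ∧ (∃ p : ℤ, |(∑ j, θ j * q' j) - c - p| ≤ ε2)}
    = ENNReal.ofReal (2*ε1) * ENNReal.ofReal (2*ε2) := by
  obtain ⟨G, hGdef⟩ : ∃ G' : (Fin m → AddCircle (1:ℝ)) →+ AddCircle (1:ℝ) × AddCircle (1:ℝ),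
      G' = (sumHom m q).prod (sumHom m q') := ⟨_, rfl⟩
  have hGcont : Continuous G := by
    rw [hGdef]; exact (sumHom_cont m q).prodMk (sumHom_cont m q')
  obtain ⟨mkPi, hmkPi⟩ : ∃ f : (Fin m → ℝ) → (Fin m → AddCircle (1:ℝ)),
      f = fun θ j => (θ j : AddCircle (1:ℝ)) := ⟨_, rfl⟩
  obtain ⟨R, hR⟩ : ∃ R' : Set (AddCircle (1:ℝ) × AddCircle (1:ℝ)),
      R' = Metric.closedBall ((c : AddCircle (1:ℝ))) ε1
        ×ˢ Metric.closedBall ((c : AddCircle (1:ℝ))) ε2 := ⟨_, rfl⟩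
  have hRmeas : MeasurableSet R := by
    rw [hR]
    exact (Metric.isClosed_closedBall.measurableSet).prod Metric.isClosed_closedBall.measurableSet
  have hmem : ∀ θ : Fin m → ℝ,
      ((∃ p : ℤ, |(∑ j, θ j * q j) - c - p| ≤ ε1)
        ∧ (∃ p : ℤ, |(∑ j, θ j * q' j) - c - p| ≤ ε2)) ↔ G (mkPi θ) ∈ R := by
    intro θ
    have hGθ : G (mkPi θ) = (((∑ j, θ j * q j : ℝ) : AddCircle (1:ℝ)),
        ((∑ j, θ j * q' j : ℝ) : AddCircle (1:ℝ))) := by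
      rw [hGdef, hmkPi]
      show (sumHom m q _, sumHom m q' _) = _
      rw [sumHom_coe, sumHom_coe]
    rw [hGθ, hR, Set.mem_prod, Metric.mem_closedBall, Metric.mem_closedBall,
      dist_eq_norm, dist_eq_norm]
    have e1 : (((∑ j, θ j * q j : ℝ) : AddCircle (1:ℝ))) - ((c : ℝ) : AddCircle (1:ℝ))
        = (((∑ j, θ j * q j) - c : ℝ) : AddCircle (1:ℝ)) := rfl
    have e2 : (((∑ j, θ j * q' j : ℝ) : AddCircle (1:ℝ))) - ((c : ℝ) : AddCircle (1:ℝ))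
        = (((∑ j, θ j * q' j) - c : ℝ) : AddCircle (1:ℝ)) := rfl
    rw [e1, e2, ← exists_int_iff_norm, ← exists_int_iff_norm]
  have hSeq : {θ : Fin m → ℝ | (∀ j, |θ j| ≤ 1/2) ∧ (∃ p : ℤ, |(∑ j, θ j * q j) - c - p| ≤ ε1)
      ∧ (∃ p : ℤ, |(∑ j, θ j * q' j) - c - p| ≤ ε2)}
      = (Set.univ.pi fun _ => Set.Icc (-(1/2):ℝ) (1/2)) ∩ ((G ∘ mkPi) ⁻¹' R) := by
    ext θ
    simp only [Set.mem_setOf_eq, Set.mem_inter_iff, Set.mem_preimage, Function.comp_apply,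
      Set.mem_pi, Set.mem_univ, forall_true_left, Set.mem_Icc, ← abs_le]
    rw [← hmem θ]
  have hnull : ∀ j : Fin m, volume {θ : Fin m → ℝ | θ j = -(1/2)} = 0 := by
    intro j
    have : {θ : Fin m → ℝ | θ j = -(1/2)}
        = Set.univ.pi (fun k => if k = j then ({-(1/2)} : Set ℝ) else Set.univ) := by
      ext θ
      simp only [Set.mem_setOf_eq, Set.mem_pi, Set.mem_univ, forall_true_left]
      constructor
      · intro h k
        by_cases hk : k = j <;> simp [hk, h]
      · intro h
        have := h j
        simpa using this
    rw [this, volume_pi_pi]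
    refine Finset.prod_eq_zero (Finset.mem_univ j) ?_
    simp
  have hIoc : volume ((Set.univ.pi fun _ : Fin m => Set.Ioc (-(1/2):ℝ) (1/2)) ∩ ((G ∘ mkPi) ⁻¹' R))
      = ENNReal.ofReal (2*ε1) * ENNReal.ofReal (2*ε2) := by
    have hmkPiMeas : Measurable mkPi := by
      rw [hmkPi]
      exact measurable_pi_iff.mpr fun j =>
        (AddCircle.measurable_mk' (a := (1:ℝ))).comp (measurable_pi_apply j)
    have hpre : MeasurableSet ((G ∘ mkPi) ⁻¹' R) :=
      (hGcont.measurable.comp hmkPiMeas) hRmeas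
    rw [Set.inter_comm, ← Measure.restrict_apply'
        (MeasurableSet.univ_pi fun _ => measurableSet_Ioc),
      ← restrict_pi_pi' _ (fun _ => measurableSet_Ioc)]
    have hmp : MeasurePreserving mkPi
        (Measure.pi fun _ : Fin m => volume.restrict (Set.Ioc (-(1/2):ℝ) (1/2)))
        (volume : Measure (Fin m → AddCircle (1:ℝ))) := by
      have base := AddCircle.measurePreserving_mk (T := 1) (-(1/2 : ℝ))
      rw [show -(1/2:ℝ) + 1 = 1/2 by norm_num] at base
      rw [hmkPi]
      exact measurePreserving_pi _ _ (fun _ => base)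
    rw [show (G ∘ mkPi) ⁻¹' R = mkPi ⁻¹' (G ⁻¹' R) from rfl]
    rw [hmp.measure_preimage (hGcont.measurable hRmeas).nullMeasurableSet]
    rw [← Measure.map_apply hGcont.measurable hRmeas, hGdef, map_G_eq m q q' hind]
    rw [hR, show (volume : Measure (AddCircle (1:ℝ) × AddCircle (1:ℝ)))
        = (volume : Measure (AddCircle (1:ℝ))).prod volume from rfl, Measure.prod_prod,
      AddCircle.volume_closedBall, AddCircle.volume_closedBall]
    rw [min_eq_right (by linarith), min_eq_right (by linarith)]
  refine le_antisymm ?_ ?_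
  · rw [hSeq, ← hIoc]
    have hsub : (Set.univ.pi fun _ : Fin m => Set.Icc (-(1/2):ℝ) (1/2)) ∩ ((G ∘ mkPi) ⁻¹' R)
        ⊆ ((Set.univ.pi fun _ : Fin m => Set.Ioc (-(1/2):ℝ) (1/2)) ∩ ((G ∘ mkPi) ⁻¹' R))
          ∪ ⋃ j : Fin m, {θ : Fin m → ℝ | θ j = -(1/2)} := by
      rintro θ ⟨hcube, hpre⟩
      by_cases h : ∀ j, θ j ∈ Set.Ioc (-(1/2):ℝ) (1/2)
      · exact Or.inl ⟨fun j _ => h j, hpre⟩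
      · push_neg at h
        obtain ⟨j, hj⟩ := h
        refine Or.inr (Set.mem_iUnion.mpr ⟨j, ?_⟩)
        have hj2 := hcube j (Set.mem_univ j)
        simp only [Set.mem_Icc] at hj2
        simp only [Set.mem_Ioc, not_and_or, not_lt, not_le] at hj
        show θ j = -(1/2)
        rcases hj with h' | h'
        · linarith [hj2.1]
        · linarith [hj2.2]
    calc volume _ ≤ volume (((Set.univ.pi fun _ : Fin m => Set.Ioc (-(1/2):ℝ) (1/2))
          ∩ ((G ∘ mkPi) ⁻¹' R)) ∪ ⋃ j : Fin m, {θ : Fin m → ℝ | θ j = -(1/2)}) :=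
        measure_mono hsub
      _ ≤ volume ((Set.univ.pi fun _ : Fin m => Set.Ioc (-(1/2):ℝ) (1/2)) ∩ ((G ∘ mkPi) ⁻¹' R))
          + volume (⋃ j : Fin m, {θ : Fin m → ℝ | θ j = -(1/2)}) := measure_union_le _ _
      _ = volume ((Set.univ.pi fun _ : Fin m => Set.Ioc (-(1/2):ℝ) (1/2)) ∩ ((G ∘ mkPi) ⁻¹' R)) := by
          rw [measure_iUnion_null (fun j => hnull j), add_zero]
  · rw [hSeq, ← hIoc]
    refine measure_mono (Set.inter_subset_inter_left _ ?_)
    exact Set.pi_mono fun i _ => Set.Ioc_subset_Icc_self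

/-- For q, q' ∈ ℤ^m linearly independent over ℝ, the set of Θ in the cube |Θ| ≤ 1/2
with ‖Θq - y‖ ≤ ψ(|q|) and ‖Θq' - y‖ ≤ ψ(|q'|) has Lebesgue measure exactly
4^n ψ(|q|)^n ψ(|q'|)^n. -/
theorem stmt5 (m n : ℕ) (hm : 0 < m) (hn : 0 < n) (ψ : ℕ → ℝ)
    (hψ : ∀ j, 0 < ψ j ∧ ψ j < 1 / 2) (y : Fin n → ℝ) (q q' : Fin m → ℤ)
    (hind : LinearIndependent ℝ ![(fun j => (q j : ℝ)), (fun j => (q' j : ℝ))]) :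
    volume {Θ : Fin n → Fin m → ℝ |
        (∀ i j, |Θ i j| ≤ 1 / 2) ∧
        (∀ i, ∃ p : ℤ, |(∑ j, Θ i j * q j) - y i - p| ≤
          ψ (Finset.univ.sup fun j => (q j).natAbs)) ∧
        ∀ i, ∃ p : ℤ, |(∑ j, Θ i j * q' j) - y i - p| ≤
          ψ (Finset.univ.sup fun j => (q' j).natAbs)} =
      ENNReal.ofReal ((4 : ℝ) ^ n * ψ (Finset.univ.sup fun j => (q j).natAbs) ^ n *
        ψ (Finset.univ.sup fun j => (q' j).natAbs) ^ n) := by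
  obtain ⟨ε1, hε1⟩ : ∃ x, x = ψ (Finset.univ.sup fun j => (q j).natAbs) := ⟨_, rfl⟩
  obtain ⟨ε2, hε2⟩ : ∃ x, x = ψ (Finset.univ.sup fun j => (q' j).natAbs) := ⟨_, rfl⟩
  have h1 : 0 < ε1 := hε1 ▸ (hψ _).1
  have h1' : ε1 < 1/2 := hε1 ▸ (hψ _).2
  have h2 : 0 < ε2 := hε2 ▸ (hψ _).1
  have h2' : ε2 < 1/2 := hε2 ▸ (hψ _).2
  rw [← hε1, ← hε2]
  have hset : {Θ : Fin n → Fin m → ℝ |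
        (∀ i j, |Θ i j| ≤ 1 / 2) ∧
        (∀ i, ∃ p : ℤ, |(∑ j, Θ i j * q j) - y i - p| ≤ ε1) ∧
        ∀ i, ∃ p : ℤ, |(∑ j, Θ i j * q' j) - y i - p| ≤ ε2}
      = Set.univ.pi (fun i => {θ : Fin m → ℝ | (∀ j, |θ j| ≤ 1/2)
          ∧ (∃ p : ℤ, |(∑ j, θ j * q j) - y i - p| ≤ ε1)
          ∧ (∃ p : ℤ, |(∑ j, θ j * q' j) - y i - p| ≤ ε2)}) := by
    ext Θ
    simp only [Set.mem_setOf_eq, Set.mem_pi, Set.mem_univ, forall_true_left]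
    constructor
    · rintro ⟨hP, hQ, hRr⟩ i
      exact ⟨hP i, hQ i, hRr i⟩
    · intro h
      exact ⟨fun i => (h i).1, fun i => (h i).2.1, fun i => (h i).2.2⟩
  rw [hset, volume_pi_pi]
  have hrow : ∀ i : Fin n, volume {θ : Fin m → ℝ | (∀ j, |θ j| ≤ 1/2)
      ∧ (∃ p : ℤ, |(∑ j, θ j * q j) - y i - p| ≤ ε1)
      ∧ (∃ p : ℤ, |(∑ j, θ j * q' j) - y i - p| ≤ ε2)}
      = ENNReal.ofReal (2*ε1) * ENNReal.ofReal (2*ε2) :=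
    fun i => rowVol m q q' hind (y i) ε1 ε2 h1 h1' h2 h2'
  rw [Finset.prod_congr rfl (fun i _ => hrow i), Finset.prod_const]
  rw [← ENNReal.ofReal_mul (by linarith), ← ENNReal.ofReal_pow (by nlinarith)]
  congr 1
  simp only [Finset.card_univ, Fintype.card_fin]
  ring
end

section
/- Let y ∈ ℝ^n, a ∈ ℤ^m nonzero, and q, q' coprime integers with |q| ≥ |q'| > 0. Set Q = qa, Q' = q'a, and for r > 0 let B_s(y, r) = {z ∈ 𝕋^n : ‖sz - y‖ ≤ r} for an integer s ≠ 0. Then for any r, r' ∈ (0, 1/2), the Haar measure of B_q(y, r) ∩ B_{q'}(y, r') is at most 12^n r^n max(r', 1/|q|)^n. -/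
open MeasureTheory

section Aux

open Set

/-- Periodic cover lemma: integer translates of a closed ball intersected with [0,1)
have total measure at most the measure of one ball. -/
lemma ball_cover_vol (b ρ : ℝ) (hρ : 0 ≤ ρ) :
    volume (Set.Ico (0:ℝ) 1 ∩ ⋃ s : ℤ, Metric.closedBall (b + s) ρ) ≤
      ENNReal.ofReal (2 * ρ) := by
  have h1 : Set.Ico (0:ℝ) 1 ∩ ⋃ s : ℤ, Metric.closedBall (b + s) ρ
      = ⋃ s : ℤ, (Set.Ico (0:ℝ) 1 ∩ Metric.closedBall (b + s) ρ) := by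
    rw [Set.inter_iUnion]
  rw [h1]
  refine le_trans (measure_iUnion_le _) ?_
  have h2 : ∀ s : ℤ, volume (Set.Ico (0:ℝ) 1 ∩ Metric.closedBall (b + s) ρ)
      = volume (Set.Ico (-(s:ℝ)) (1 - s) ∩ Metric.closedBall b ρ) := by
    intro s
    have heq : Set.Ico (0:ℝ) 1 ∩ Metric.closedBall (b + s) ρ
        = (fun t => (-(s:ℝ)) + t) ⁻¹' (Set.Ico (-(s:ℝ)) (1 - s) ∩ Metric.closedBall b ρ) := by
      ext t
      simp only [Set.mem_inter_iff, Set.mem_Ico, Set.mem_preimage, Metric.mem_closedBall,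
        Real.dist_eq]
      constructor
      · rintro ⟨⟨h0, h1'⟩, hb⟩
        refine ⟨⟨by linarith, by linarith⟩, ?_⟩
        have : -(s:ℝ) + t - b = t - (b + s) := by ring
        rw [this]; exact hb
      · rintro ⟨⟨h0, h1'⟩, hb⟩
        refine ⟨⟨by linarith, by linarith⟩, ?_⟩
        have : t - (b + s) = -(s:ℝ) + t - b := by ring
        rw [this]; exact hb
    rw [heq, measure_preimage_add]
  calc (∑' s : ℤ, volume (Set.Ico (0:ℝ) 1 ∩ Metric.closedBall (b + s) ρ))
      = ∑' s : ℤ, volume (Set.Ico (-(s:ℝ)) (1 - s) ∩ Metric.closedBall b ρ) := by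
        exact tsum_congr h2
    _ = volume (⋃ s : ℤ, (Set.Ico (-(s:ℝ)) (1 - s) ∩ Metric.closedBall b ρ)) := by
        refine (measure_iUnion ?_ ?_).symm
        · intro s s' hss
          refine Set.disjoint_left.2 ?_
          rintro t ⟨⟨h0, h1'⟩, -⟩ ⟨⟨h0', h1''⟩, -⟩
          apply hss
          have : (s : ℝ) = s' := by
            have h1 : (s : ℝ) < s' + 1 := by linarith
            have h2' : (s' : ℝ) < s + 1 := by linarith
            exact_mod_cast le_antisymm (by exact_mod_cast Int.lt_add_one_iff.1 (by exact_mod_cast h1)) (by exact_mod_cast Int.lt_add_one_iff.1 (by exact_mod_cast h2'))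
          exact_mod_cast this
        · intro s
          exact (measurableSet_Ico).inter measurableSet_closedBall
    _ ≤ volume (Metric.closedBall b ρ) := by
        apply measure_mono
        exact Set.iUnion_subset fun s => Set.inter_subset_right
    _ = ENNReal.ofReal (2 * ρ) := Real.volume_closedBall b ρ


lemma oneDim (q q' : ℤ) (hco : IsCoprime q q') (hq' : 0 < |q'|) (hqq' : |q'| ≤ |q|)
    (r r' : ℝ) (hr : r ∈ Set.Ioo (0:ℝ) (1/2)) (hr' : r' ∈ Set.Ioo (0:ℝ) (1/2)) (c : ℝ) :
    volume {t : ℝ | t ∈ Set.Ico (0:ℝ) 1 ∧ (∃ p : ℤ, |(q:ℝ)*t - c - p| ≤ r) ∧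
      (∃ p : ℤ, |(q':ℝ)*t - c - p| ≤ r')} ≤
      ENNReal.ofReal (12 * (r * max r' (1 / |(q:ℝ)|))) := by
  obtain ⟨u, v, huv⟩ := hco
  have hco' : IsCoprime q q' := ⟨u, v, huv⟩
  have hq'0 : q' ≠ 0 := by rintro rfl; simp at hq'
  have hq0 : q ≠ 0 := by
    rintro rfl; simp at hqq'; exact hq'0 hqq'
  have hQ1 : (1:ℝ) ≤ |(q:ℝ)| := by
    have : (1:ℤ) ≤ |q| := lt_of_lt_of_le hq' hqq'
    calc (1:ℝ) = ((1:ℤ):ℝ) := by norm_num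
      _ ≤ (|q| : ℝ) := by exact_mod_cast this
      _ = |(q:ℝ)| := by push_cast; ring
  have hQ'1 : (1:ℝ) ≤ |(q':ℝ)| := by
    calc (1:ℝ) = ((1:ℤ):ℝ) := by norm_num
      _ ≤ (|q'| : ℝ) := by exact_mod_cast hq'
      _ = |(q':ℝ)| := by push_cast; ring
  have hQpos : (0:ℝ) < |(q:ℝ)| := by linarith
  have hQ'pos : (0:ℝ) < |(q':ℝ)| := by linarith
  set L : ℝ := |(q':ℝ)| * r + |(q:ℝ)| * r' with hL
  set d : ℝ := ((q:ℝ) - q') * c with hd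
  set Kfin : Finset ℤ := Finset.Icc ⌈-d - L⌉ ⌊-d + L⌋ with hK
  -- centers
  set P : ℤ → ℤ := fun k => -(v * k) with hP
  set P' : ℤ → ℤ := fun k => u * k with hP'
  have hPk : ∀ k : ℤ, q * P' k - q' * P k = k := by
    intro k; simp only [hP, hP']; ring_nf; linear_combination k * huv
  set Cq : ℤ → Set ℝ := fun k =>
    Set.Ico (0:ℝ) 1 ∩ ⋃ s : ℤ, Metric.closedBall ((c + (P k : ℝ))/(q:ℝ) + s) (r / |(q:ℝ)|) with hCq
  set Cq' : ℤ → Set ℝ := fun k =>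
    Set.Ico (0:ℝ) 1 ∩ ⋃ s : ℤ, Metric.closedBall ((c + (P' k : ℝ))/(q':ℝ) + s) (r' / |(q':ℝ)|)
    with hCq'
  -- the cover
  have hsub : {t : ℝ | t ∈ Set.Ico (0:ℝ) 1 ∧ (∃ p : ℤ, |(q:ℝ)*t - c - p| ≤ r) ∧
      (∃ p : ℤ, |(q':ℝ)*t - c - p| ≤ r')} ⊆ ⋃ k ∈ Kfin, (Cq k ∩ Cq' k) := by
    rintro t ⟨ht01, ⟨p, hp⟩, ⟨p', hp'⟩⟩
    set k : ℤ := q * p' - q' * p with hkdef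
    have hdk : |d + (k:ℝ)| ≤ L := by
      have hrew : d + (k:ℝ) = (q':ℝ)*((q:ℝ)*t - c - p) - (q:ℝ)*((q':ℝ)*t - c - p') := by
        simp only [hd, hkdef]; push_cast; ring
      rw [hrew]
      calc |(q':ℝ)*((q:ℝ)*t - c - p) - (q:ℝ)*((q':ℝ)*t - c - p')|
          ≤ |(q':ℝ)*((q:ℝ)*t - c - p)| + |(q:ℝ)*((q':ℝ)*t - c - p')| := abs_sub _ _
        _ = |(q':ℝ)| * |(q:ℝ)*t - c - p| + |(q:ℝ)| * |(q':ℝ)*t - c - p'| := by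
            rw [abs_mul, abs_mul]
        _ ≤ |(q':ℝ)| * r + |(q:ℝ)| * r' := by
            gcongr
    have hkmem : k ∈ Kfin := by
      rw [hK, Finset.mem_Icc]
      rw [abs_le] at hdk
      constructor
      · exact Int.ceil_le.2 (by push_cast; linarith [hdk.1])
      · exact Int.le_floor.2 (by push_cast; linarith [hdk.2])
    -- find s
    have hkey : q' * (p - P k) = q * (p' - P' k) := by
      have := hPk k
      rw [hkdef] at this ⊢
      ring_nf
      ring_nf at this
      linarith [this]
    have hdvd : q ∣ (p - P k) := by
      apply hco'.dvd_of_dvd_mul_left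
      exact ⟨p' - P' k, hkey⟩
    obtain ⟨s, hs⟩ := hdvd
    have hs' : p' - P' k = q' * s := by
      have h1 : q * (q' * s) = q * (p' - P' k) := by
        rw [← hkey, hs]; ring
      exact (mul_left_cancel₀ hq0 h1).symm
    refine Set.mem_biUnion hkmem ⟨⟨ht01, ?_⟩, ⟨ht01, ?_⟩⟩
    · refine Set.mem_iUnion.2 ⟨s, ?_⟩
      rw [Metric.mem_closedBall, Real.dist_eq]
      have heq : t - ((c + (P k : ℝ))/(q:ℝ) + s) = ((q:ℝ)*t - c - p)/(q:ℝ) := by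
        have hpc : (p:ℝ) = (P k : ℝ) + (q:ℝ) * s := by
          have : (p:ℝ) - (P k : ℝ) = (q:ℝ) * s := by exact_mod_cast congrArg (Int.cast : ℤ → ℝ) hs
          linarith
        field_simp
        linarith [hpc]
      rw [heq, abs_div]
      gcongr
    · refine Set.mem_iUnion.2 ⟨s, ?_⟩
      rw [Metric.mem_closedBall, Real.dist_eq]
      have heq : t - ((c + (P' k : ℝ))/(q':ℝ) + s) = ((q':ℝ)*t - c - p')/(q':ℝ) := by
        have hpc : (p':ℝ) = (P' k : ℝ) + (q':ℝ) * s := by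
          have : (p':ℝ) - (P' k : ℝ) = (q':ℝ) * s := by
            exact_mod_cast congrArg (Int.cast : ℤ → ℝ) hs'
          linarith
        field_simp
        linarith [hpc]
      rw [heq, abs_div]
      gcongr
  -- measure each piece
  have hpiece : ∀ k ∈ Kfin, volume (Cq k ∩ Cq' k) ≤
      ENNReal.ofReal (min (2 * (r / |(q:ℝ)|)) (2 * (r' / |(q':ℝ)|))) := by
    intro k _
    rcases le_total (2 * (r / |(q:ℝ)|)) (2 * (r' / |(q':ℝ)|)) with h | h
    · rw [min_eq_left h]
      refine le_trans (measure_mono Set.inter_subset_left) ?_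
      exact ball_cover_vol _ _ (div_nonneg hr.1.le (abs_nonneg _))
    · rw [min_eq_right h]
      refine le_trans (measure_mono Set.inter_subset_right) ?_
      exact ball_cover_vol _ _ (div_nonneg hr'.1.le (abs_nonneg _))
  -- counting
  have hr0 : (0:ℝ) ≤ r := hr.1.le
  have hr'0 : (0:ℝ) ≤ r' := hr'.1.le
  have hL0 : (0:ℝ) ≤ L := by
    rw [hL]
    have := abs_nonneg (q:ℝ); have := abs_nonneg (q':ℝ)
    nlinarith
  have hcard : ((Kfin.card : ℕ) : ℝ) ≤ 2 * L + 1 := by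
    rw [hK, Int.card_Icc]
    have h1 : (((⌊-d + L⌋ + 1 - ⌈-d - L⌉).toNat : ℕ) : ℝ)
        = (((⌊-d + L⌋ + 1 - ⌈-d - L⌉).toNat : ℤ) : ℝ) := by push_cast; ring
    rw [h1, Int.toNat_eq_max]
    push_cast [Int.cast_max]
    apply max_le
    · have h2 : ((⌊-d + L⌋ : ℤ) : ℝ) ≤ -d + L := Int.floor_le _
      have h3 : -d - L ≤ ((⌈-d - L⌉ : ℤ) : ℝ) := Int.le_ceil _
      linarith
    · linarith
  set mn : ℝ := min (2 * (r / |(q:ℝ)|)) (2 * (r' / |(q':ℝ)|)) with hmn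
  have hmn0 : (0:ℝ) ≤ mn :=
    le_min (by positivity) (by positivity)
  have hmleft : mn ≤ 2 * (r / |(q:ℝ)|) := min_le_left _ _
  have hmright : mn ≤ 2 * (r' / |(q':ℝ)|) := min_le_right _ _
  set M : ℝ := max r' (1 / |(q:ℝ)|) with hM
  have hM1 : r' ≤ M := le_max_left _ _
  have hM2 : 1 / |(q:ℝ)| ≤ M := le_max_right _ _
  have hM0 : (0:ℝ) ≤ M := le_trans hr'0 hM1
  have hfinal : ((Kfin.card : ℕ) : ℝ) * mn ≤ 12 * (r * M) := by
    have c1 : ((Kfin.card : ℕ) : ℝ) * mn ≤ (2 * L + 1) * mn :=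
      mul_le_mul_of_nonneg_right hcard hmn0
    have c2 : (2 * L + 1) * mn
        = (2*(|(q':ℝ)| * r))*mn + (2*(|(q:ℝ)| * r'))*mn + mn := by rw [hL]; ring
    have c3 : (2*(|(q':ℝ)| * r))*mn ≤ (2*(|(q':ℝ)| * r)) * (2 * (r' / |(q':ℝ)|)) :=
      mul_le_mul_of_nonneg_left hmright (by positivity)
    have c4 : (2*(|(q:ℝ)| * r'))*mn ≤ (2*(|(q:ℝ)| * r')) * (2 * (r / |(q:ℝ)|)) :=
      mul_le_mul_of_nonneg_left hmleft (by positivity)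
    have e1 : (2*(|(q':ℝ)| * r)) * (2 * (r' / |(q':ℝ)|)) = 4 * (r * r') := by
      field_simp
      ring
    have e2 : (2*(|(q:ℝ)| * r')) * (2 * (r / |(q:ℝ)|)) = 4 * (r * r') := by
      field_simp
      ring
    have e3 : 2 * (r / |(q:ℝ)|) = 2 * (r * (1 / |(q:ℝ)|)) := by ring
    have d1 : r * r' ≤ r * M := mul_le_mul_of_nonneg_left hM1 hr0
    have d2 : r * (1 / |(q:ℝ)|) ≤ r * M := mul_le_mul_of_nonneg_left hM2 hr0
    have d3 : 0 ≤ r * M := mul_nonneg hr0 hM0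
    calc ((Kfin.card : ℕ) : ℝ) * mn ≤ (2 * L + 1) * mn := c1
      _ = (2*(|(q':ℝ)| * r))*mn + (2*(|(q:ℝ)| * r'))*mn + mn := c2
      _ ≤ (2*(|(q':ℝ)| * r)) * (2 * (r' / |(q':ℝ)|))
          + (2*(|(q:ℝ)| * r')) * (2 * (r / |(q:ℝ)|)) + 2 * (r / |(q:ℝ)|) :=
        add_le_add (add_le_add c3 c4) hmleft
      _ = 4 * (r * r') + 4 * (r * r') + 2 * (r * (1 / |(q:ℝ)|)) := by
        rw [e1, e2, e3]
      _ ≤ 4 * (r * M) + 4 * (r * M) + 2 * (r * M) := by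
        apply add_le_add (add_le_add _ _) _ <;> linarith
      _ ≤ 12 * (r * M) := by linarith
  calc volume {t : ℝ | t ∈ Set.Ico (0:ℝ) 1 ∧ (∃ p : ℤ, |(q:ℝ)*t - c - p| ≤ r) ∧
        (∃ p : ℤ, |(q':ℝ)*t - c - p| ≤ r')}
      ≤ volume (⋃ k ∈ Kfin, (Cq k ∩ Cq' k)) := measure_mono hsub
    _ ≤ ∑ k ∈ Kfin, volume (Cq k ∩ Cq' k) := measure_biUnion_finset_le _ _
    _ ≤ ∑ _k ∈ Kfin, ENNReal.ofReal mn := Finset.sum_le_sum hpiece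
    _ = Kfin.card • ENNReal.ofReal mn := by rw [Finset.sum_const]
    _ = ENNReal.ofReal (((Kfin.card : ℕ) : ℝ) * mn) := by
        rw [nsmul_eq_mul, ENNReal.ofReal_mul (by positivity), ENNReal.ofReal_natCast]
    _ ≤ ENNReal.ofReal (12 * (r * max r' (1 / |(q:ℝ)|))) := ENNReal.ofReal_le_ofReal hfinal


end Aux

/-- For coprime integers q, q' with |q| ≥ |q'| > 0 and radii r, r' ∈ (0, 1/2),
the Haar measure on 𝕋^n (realized by the fundamental domain [0,1)^n) of
B_q(y, r) ∩ B_{q'}(y, r') is at most 12^n r^n max(r', 1/|q|)^n. -/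
theorem stmt6 (m n : ℕ) (hm : 0 < m) (hn : 0 < n) (y : Fin n → ℝ)
    (a : Fin m → ℤ) (ha : a ≠ 0) (q q' : ℤ) (hco : IsCoprime q q')
    (hq' : 0 < |q'|) (hqq' : |q'| ≤ |q|)
    (Q Q' : Fin m → ℤ) (hQ : Q = fun i => q * a i) (hQ' : Q' = fun i => q' * a i)
    (r r' : ℝ) (hr : r ∈ Set.Ioo (0 : ℝ) (1 / 2)) (hr' : r' ∈ Set.Ioo (0 : ℝ) (1 / 2)) :
    volume {z : Fin n → ℝ |
        (∀ i, z i ∈ Set.Ico (0 : ℝ) 1) ∧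
        (∀ i, ∃ p : ℤ, |(q : ℝ) * z i - y i - p| ≤ r) ∧
        (∀ i, ∃ p : ℤ, |(q' : ℝ) * z i - y i - p| ≤ r')} ≤
      ENNReal.ofReal ((12 : ℝ) ^ n * r ^ n * max r' (1 / |(q : ℝ)|) ^ n) := by
  set A : ℝ → Set ℝ := fun c => {t : ℝ | t ∈ Set.Ico (0:ℝ) 1 ∧
      (∃ p : ℤ, |(q:ℝ)*t - c - p| ≤ r) ∧ (∃ p : ℤ, |(q':ℝ)*t - c - p| ≤ r')} with hA
  have hset : {z : Fin n → ℝ |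
        (∀ i, z i ∈ Set.Ico (0 : ℝ) 1) ∧
        (∀ i, ∃ p : ℤ, |(q : ℝ) * z i - y i - p| ≤ r) ∧
        (∀ i, ∃ p : ℤ, |(q' : ℝ) * z i - y i - p| ≤ r')}
      = Set.pi Set.univ (fun i => A (y i)) := by
    ext z
    simp only [Set.mem_setOf_eq, Set.mem_pi, Set.mem_univ, forall_true_left, hA,
      forall_const]
    constructor
    · rintro ⟨h1, h2, h3⟩ i; exact ⟨h1 i, h2 i, h3 i⟩
    · intro h; exact ⟨fun i => (h i).1, fun i => (h i).2.1, fun i => (h i).2.2⟩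
  rw [hset, volume_pi_pi]
  have hM0 : (0:ℝ) ≤ max r' (1 / |(q:ℝ)|) := le_trans hr'.1.le (le_max_left _ _)
  have hbound : ∀ i : Fin n, volume (A (y i)) ≤
      ENNReal.ofReal (12 * (r * max r' (1 / |(q:ℝ)|))) := fun i =>
    oneDim q q' hco hq' hqq' r r' hr hr' (y i)
  calc (∏ i : Fin n, volume (A (y i)))
      ≤ ∏ _i : Fin n, ENNReal.ofReal (12 * (r * max r' (1 / |(q:ℝ)|))) :=
        Finset.prod_le_prod' fun i _ => hbound i
    _ = ENNReal.ofReal (12 * (r * max r' (1 / |(q:ℝ)|))) ^ n := by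
        rw [Finset.prod_const, Finset.card_univ, Fintype.card_fin]
    _ = ENNReal.ofReal ((12 * (r * max r' (1 / |(q:ℝ)|))) ^ n) := by
        rw [← ENNReal.ofReal_pow (by nlinarith [hr.1.le, hM0, mul_nonneg hr.1.le hM0] : (0:ℝ) ≤ 12 * (r * max r' (1 / |(q:ℝ)|)))]
    _ = ENNReal.ofReal ((12 : ℝ) ^ n * r ^ n * max r' (1 / |(q : ℝ)|) ^ n) := by
        rw [show (12 * (r * max r' (1 / |(q:ℝ)|))) ^ n
            = (12 : ℝ) ^ n * r ^ n * max r' (1 / |(q : ℝ)|) ^ n by rw [mul_pow, mul_pow]; ring]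
end

section
/- Let m, n ∈ ℕ, ψ : ℕ → (0,∞), and suppose ∑_{ℓ≥1} ℓ^{m-1}ψ(ℓ)^n < ∞. Then for almost every (Θ, y) ∈ Mat_{n,m}(ℝ) × ℝ^n (with respect to Lebesgue measure), there exist only finitely many pairs (q, p) ∈ ℤ^m × ℤ^n with |Θq + p - y| ≤ ψ(|q|). -/
open MeasureTheory

open Filter Set in
private lemma aux_pow_sub (m a b : ℕ) (h : b ≤ a) :
    a ^ m ≤ b ^ m + m * (a - b) * a ^ (m - 1) := by
  induction m with
  | zero => simp
  | succ m ih =>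
    rcases Nat.eq_zero_or_pos m with rfl | hm
    · simpa using by omega
    have hpow : a ^ (m - 1) * a = a ^ m := by
      rw [← pow_succ]; congr 1; omega
    calc a ^ (m+1) = a * a ^ m := by ring
      _ ≤ a * (b ^ m + m * (a - b) * a ^ (m - 1)) := Nat.mul_le_mul_left a ih
      _ = a * b ^ m + m * (a - b) * (a ^ (m-1) * a) := by ring
      _ = (b + (a - b)) * b ^ m + m * (a - b) * a ^ m := by rw [hpow]; congr 2; omega
      _ = b ^ (m+1) + (a - b) * b ^ m + m * (a-b) * a ^ m := by ring
      _ ≤ b ^ (m+1) + (a - b) * a ^ m + m * (a-b) * a ^ m := by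
          have h2 := Nat.pow_le_pow_left h m
          exact Nat.add_le_add_right (Nat.add_le_add_left (Nat.mul_le_mul_left _ h2) _) _
      _ = b ^ (m+1) + (m+1) * (a - b) * a ^ ((m+1) - 1) := by
          simp only [Nat.add_sub_cancel]; ring

open Filter Set in
private lemma int_cast_Icc_finite (lo hi : ℝ) : {a : ℤ | (a : ℝ) ∈ Set.Icc lo hi}.Finite := by
  apply (Set.finite_Icc ⌈lo⌉ ⌊hi⌋).subset
  rintro a ⟨h1, h2⟩
  exact ⟨Int.ceil_le.2 h1, Int.le_floor.2 h2⟩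

open Filter Set in
private lemma pfinite (n : ℕ) (c y : Fin n → ℝ) (r : ℝ) :
    {p : Fin n → ℤ | ∀ i, |c i + p i - y i| ≤ r}.Finite := by
  apply Set.Finite.subset (Set.Finite.pi (fun i =>
    int_cast_Icc_finite (y i - c i - r) (y i - c i + r)))
  intro p hp
  intro i _
  have := hp i
  rw [abs_le] at this
  simp only [Set.mem_setOf_eq, Set.mem_Icc]
  exact ⟨by linarith [this.1], by linarith [this.2]⟩

open Filter Set in
private lemma onedim_mem (v b ψr : ℝ) (h1 : ψr ≤ 1) (t : ℝ) (a : ℤ)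
    (htb : b ≤ t) (htb' : t < b + 1) (ha : |v + a - t| ≤ ψr) :
    a ∈ Finset.Icc ⌈b - v - 1⌉ ⌊b - v + 2⌋ ∧ t ∈ Set.Icc (v + a - ψr) (v + a + ψr) := by
  rw [abs_le] at ha
  refine ⟨Finset.mem_Icc.2 ⟨Int.ceil_le.2 (by linarith [ha.1, ha.2]),
    Int.le_floor.2 (by linarith [ha.1, ha.2])⟩, ⟨by linarith [ha.2], by linarith [ha.1]⟩⟩

open Filter Set in
private lemma onedim_vol (v b ψr : ℝ) (h0 : 0 ≤ ψr) :
    volume (⋃ a ∈ Finset.Icc ⌈b - v - 1⌉ ⌊b - v + 2⌋, Set.Icc (v + a - ψr) (v + a + ψr))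
      ≤ ENNReal.ofReal (8 * ψr) := by
  have hcard : (Finset.Icc ⌈b - v - 1⌉ ⌊b - v + 2⌋).card ≤ 4 := by
    rw [Int.card_Icc]
    rw [Int.toNat_le]
    have h1 : (⌊b - v + 2⌋ : ℝ) ≤ b - v + 2 := Int.floor_le _
    have h2 : (b - v - 1 : ℝ) ≤ ⌈b - v - 1⌉ := Int.le_ceil _
    have h : (⌊b - v + 2⌋ : ℝ) ≤ (⌈b - v - 1⌉ : ℝ) + 3 := by linarith
    have h3 : ⌊b - v + 2⌋ ≤ ⌈b - v - 1⌉ + 3 := by exact_mod_cast h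
    omega
  calc volume (⋃ a ∈ Finset.Icc ⌈b - v - 1⌉ ⌊b - v + 2⌋, Set.Icc (v + a - ψr) (v + a + ψr))
      ≤ ∑ a ∈ Finset.Icc ⌈b - v - 1⌉ ⌊b - v + 2⌋, volume (Set.Icc (v + a - ψr) (v + a + ψr)) :=
        measure_biUnion_finset_le _ _
    _ = ∑ _a ∈ Finset.Icc ⌈b - v - 1⌉ ⌊b - v + 2⌋, ENNReal.ofReal (2 * ψr) := by
        apply Finset.sum_congr rfl
        intro a _
        rw [Real.volume_Icc]
        congr 1
        ring
    _ = (Finset.Icc ⌈b - v - 1⌉ ⌊b - v + 2⌋).card • ENNReal.ofReal (2 * ψr) :=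
        Finset.sum_const _
    _ ≤ 4 * ENNReal.ofReal (2 * ψr) := by
        rw [nsmul_eq_mul]
        gcongr
        exact_mod_cast hcard
    _ = ENNReal.ofReal (8 * ψr) := by
        rw [← ENNReal.ofReal_ofNat 4, ← ENNReal.ofReal_mul (by norm_num)]
        congr 1
        ring

open Filter Set in
private lemma volA (m n : ℕ) (q : Fin m → ℤ) (k1 : Fin n → Fin m → ℤ) (k2 : Fin n → ℤ)
    (ψr : ℝ) (h0 : 0 ≤ ψr) (h1 : ψr ≤ 1) :
    volume {x : (Fin n → Fin m → ℝ) × (Fin n → ℝ) |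
        (∀ i j, x.1 i j ∈ Set.Ico (k1 i j : ℝ) (k1 i j + 1)) ∧
        (∀ i, x.2 i ∈ Set.Ico (k2 i : ℝ) (k2 i + 1)) ∧
        ∃ p : Fin n → ℤ, ∀ i, |(∑ j, x.1 i j * q j) + p i - x.2 i| ≤ ψr}
      ≤ ENNReal.ofReal (8 * ψr) ^ n := by
  set cA : Set (Fin n → Fin m → ℝ) :=
    Set.pi Set.univ (fun i => Set.pi Set.univ (fun j => Set.Ico (k1 i j : ℝ) (k1 i j + 1)))
    with hcA_def
  have hcA_mem : ∀ Θ : Fin n → Fin m → ℝ,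
      Θ ∈ cA ↔ ∀ i j, Θ i j ∈ Set.Ico (k1 i j : ℝ) (k1 i j + 1) := by
    intro Θ; simp [hcA_def, Set.mem_pi]
  have hcA_meas : MeasurableSet cA :=
    MeasurableSet.univ_pi fun i => MeasurableSet.univ_pi fun j => measurableSet_Ico
  have hcA_vol : volume cA = 1 := by
    rw [hcA_def, volume_pi_pi]
    have : ∀ i : Fin n,
        volume (Set.pi Set.univ (fun j => Set.Ico (k1 i j : ℝ) (k1 i j + 1))) = 1 := by
      intro i
      rw [volume_pi_pi]
      simp [Real.volume_Ico]
    simp [this]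
  set A : Set ((Fin n → Fin m → ℝ) × (Fin n → ℝ)) :=
    {x | (∀ i j, x.1 i j ∈ Set.Ico (k1 i j : ℝ) (k1 i j + 1)) ∧
        (∀ i, x.2 i ∈ Set.Ico (k2 i : ℝ) (k2 i + 1)) ∧
        ∃ p : Fin n → ℤ, ∀ i, |(∑ j, x.1 i j * q j) + p i - x.2 i| ≤ ψr} with hA_def
  have hmeas_g : ∀ (i : Fin n) (p : Fin n → ℤ),
      Measurable fun x : (Fin n → Fin m → ℝ) × (Fin n → ℝ) =>
        |(∑ j, x.1 i j * q j) + p i - x.2 i| := by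
    intro i p
    apply Measurable.abs
    apply Measurable.sub
    · apply Measurable.add _ measurable_const
      apply Finset.measurable_sum
      intro j _
      exact ((measurable_pi_apply j).comp ((measurable_pi_apply i).comp measurable_fst)).mul_const _
    · exact (measurable_pi_apply i).comp measurable_snd
  have hA_meas : MeasurableSet A := by
    have e1 : A = {x : (Fin n → Fin m → ℝ) × (Fin n → ℝ) |
          ∀ i j, x.1 i j ∈ Set.Ico (k1 i j : ℝ) (k1 i j + 1)} ∩
        ({x | ∀ i, x.2 i ∈ Set.Ico (k2 i : ℝ) (k2 i + 1)} ∩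
         ⋃ p : Fin n → ℤ, ⋂ i, {x | |(∑ j, x.1 i j * q j) + p i - x.2 i| ≤ ψr}) := by
      ext x
      simp only [hA_def, Set.mem_setOf_eq, Set.mem_inter_iff, Set.mem_iUnion, Set.mem_iInter]
    rw [e1]
    refine MeasurableSet.inter ?_ (MeasurableSet.inter ?_ ?_)
    · rw [Set.setOf_forall]
      refine MeasurableSet.iInter fun i => ?_
      rw [Set.setOf_forall]
      refine MeasurableSet.iInter fun j => ?_
      exact ((measurable_pi_apply j).comp
        ((measurable_pi_apply i).comp measurable_fst)) measurableSet_Ico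
    · rw [Set.setOf_forall]
      refine MeasurableSet.iInter fun i => ?_
      exact ((measurable_pi_apply i).comp measurable_snd) measurableSet_Ico
    · refine MeasurableSet.iUnion fun p => MeasurableSet.iInter fun i => ?_
      exact measurableSet_le (hmeas_g i p) measurable_const
  calc volume A = (volume.prod volume) A := by rw [← Measure.volume_eq_prod]
    _ = ∫⁻ Θ, volume (Prod.mk Θ ⁻¹' A) := Measure.prod_apply hA_meas
    _ ≤ ∫⁻ Θ, cA.indicator (fun _ => ENNReal.ofReal (8 * ψr) ^ n) Θ := by
        apply lintegral_mono
        intro Θ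
        by_cases hΘ : Θ ∈ cA
        · rw [Set.indicator_of_mem hΘ]
          have hsub : Prod.mk Θ ⁻¹' A ⊆ Set.pi Set.univ (fun i =>
              ⋃ a ∈ Finset.Icc ⌈(k2 i : ℝ) - (∑ j, Θ i j * q j) - 1⌉
                ⌊(k2 i : ℝ) - (∑ j, Θ i j * q j) + 2⌋,
                Set.Icc ((∑ j, Θ i j * q j) + a - ψr) ((∑ j, Θ i j * q j) + a + ψr)) := by
            rintro y ⟨-, hy, p, hp⟩
            intro i _
            have h := onedim_mem (∑ j, Θ i j * q j) (k2 i) ψr h1 (y i) (p i)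
              (hy i).1 (hy i).2 (hp i)
            exact Set.mem_biUnion h.1 h.2
          calc volume (Prod.mk Θ ⁻¹' A)
              ≤ volume (Set.pi Set.univ (fun i =>
                ⋃ a ∈ Finset.Icc ⌈(k2 i : ℝ) - (∑ j, Θ i j * q j) - 1⌉
                  ⌊(k2 i : ℝ) - (∑ j, Θ i j * q j) + 2⌋,
                  Set.Icc ((∑ j, Θ i j * q j) + a - ψr) ((∑ j, Θ i j * q j) + a + ψr))) :=
                measure_mono hsub
            _ = ∏ i, volume (⋃ a ∈ Finset.Icc ⌈(k2 i : ℝ) - (∑ j, Θ i j * q j) - 1⌉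
                  ⌊(k2 i : ℝ) - (∑ j, Θ i j * q j) + 2⌋,
                  Set.Icc ((∑ j, Θ i j * q j) + a - ψr) ((∑ j, Θ i j * q j) + a + ψr)) :=
                volume_pi_pi _
            _ ≤ ∏ _i : Fin n, ENNReal.ofReal (8 * ψr) :=
                Finset.prod_le_prod' fun i _ => onedim_vol _ _ _ h0
            _ = ENNReal.ofReal (8 * ψr) ^ n := by
                simp [Finset.prod_const]
        · rw [Set.indicator_of_notMem hΘ]
          have hempty : Prod.mk Θ ⁻¹' A = ∅ := by
            ext y
            simp only [Set.mem_preimage, hA_def, Set.mem_setOf_eq, Set.mem_empty_iff_false,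
              iff_false]
            rintro ⟨h1', -, -⟩
            exact hΘ ((hcA_mem Θ).2 h1')
          simp [hempty]
    _ = ENNReal.ofReal (8 * ψr) ^ n * volume cA := lintegral_indicator_const hcA_meas _
    _ = ENNReal.ofReal (8 * ψr) ^ n := by rw [hcA_vol, mul_one]

open Filter Set in
private lemma shell_card (m r : ℕ) (hr : 1 ≤ r) :
    ((Fintype.piFinset fun _ : Fin m => Finset.Icc (-(r:ℤ)) r) \
     (Fintype.piFinset fun _ : Fin m => Finset.Icc (-(r:ℤ)+1) ((r:ℤ)-1))).card
      ≤ 2 * m * 3 ^ (m-1) * r ^ (m-1) := by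
  have hsub : (Fintype.piFinset fun _ : Fin m => Finset.Icc (-(r:ℤ)+1) ((r:ℤ)-1)) ⊆
      (Fintype.piFinset fun _ : Fin m => Finset.Icc (-(r:ℤ)) r) :=
    Fintype.piFinset_subset _ _ fun _ => Finset.Icc_subset_Icc (by omega) (by omega)
  rw [Finset.card_sdiff_of_subset hsub]
  have hc1 : (Fintype.piFinset fun _ : Fin m => Finset.Icc (-(r:ℤ)) r).card = (2*r+1)^m := by
    rw [Fintype.card_piFinset]
    simp only [Int.card_Icc]
    rw [Finset.prod_const, Finset.card_univ, Fintype.card_fin]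
    congr 1
    omega
  have hc2 : (Fintype.piFinset fun _ : Fin m => Finset.Icc (-(r:ℤ)+1) ((r:ℤ)-1)).card
      = (2*r-1)^m := by
    rw [Fintype.card_piFinset]
    simp only [Int.card_Icc]
    rw [Finset.prod_const, Finset.card_univ, Fintype.card_fin]
    congr 1
    omega
  rw [hc1, hc2]
  have key := aux_pow_sub m (2*r+1) (2*r-1) (by omega)
  have h2 : (2*r+1) - (2*r-1) = 2 := by omega
  rw [h2] at key
  have hp : (2*r+1)^(m-1) ≤ (3*r)^(m-1) := Nat.pow_le_pow_left (by omega) _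
  calc (2*r+1)^m - (2*r-1)^m ≤ m * 2 * (2*r+1)^(m-1) := by omega
    _ ≤ m * 2 * (3*r)^(m-1) := Nat.mul_le_mul_left _ hp
    _ = 2 * m * 3^(m-1) * r^(m-1) := by rw [Nat.mul_pow]; ring

/-- Convergence half of the doubly metric inhomogeneous Khintchine–Groshev theorem:
if ∑ ℓ^{m-1} ψ(ℓ)^n < ∞, then for almost every (Θ, y) only finitely many
(q, p) ∈ ℤ^m × ℤ^n satisfy |Θq + p - y| ≤ ψ(|q|). -/
theorem stmt7 (m n : ℕ) (hm : 0 < m) (hn : 0 < n) (ψ : ℕ → ℝ) (hψ : ∀ j, 0 < ψ j)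
    (hsum : Summable fun ℓ : ℕ => (ℓ : ℝ) ^ (m - 1) * ψ ℓ ^ n) :
    ∀ᵐ Θy : (Fin n → Fin m → ℝ) × (Fin n → ℝ) ∂volume,
      {qp : (Fin m → ℤ) × (Fin n → ℤ) |
        ∀ i, |(∑ j, Θy.1 i j * qp.1 j) + qp.2 i - Θy.2 i| ≤
          ψ (Finset.univ.sup fun j => (qp.1 j).natAbs)}.Finite := by
  classical
  set X := (Fin n → Fin m → ℝ) × (Fin n → ℝ)
  set sol : X → Set ((Fin m → ℤ) × (Fin n → ℤ)) := fun x =>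
    {qp | ∀ i, |(∑ j, x.1 i j * qp.1 j) + qp.2 i - x.2 i| ≤
      ψ (Finset.univ.sup fun j => (qp.1 j).natAbs)} with hsol_def
  -- choose L with ψ ℓ ≤ 1 for ℓ ≥ L
  have htend : Filter.Tendsto (fun ℓ : ℕ => (ℓ : ℝ) ^ (m - 1) * ψ ℓ ^ n)
      Filter.atTop (nhds 0) := hsum.tendsto_atTop_zero
  have hev : ∀ᶠ ℓ : ℕ in Filter.atTop, ψ ℓ ≤ 1 := by
    filter_upwards [htend.eventually (gt_mem_nhds one_pos), Filter.eventually_ge_atTop 1]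
      with ℓ h1 h2
    by_contra hgt
    push_neg at hgt
    have hψn : (1:ℝ) < ψ ℓ ^ n := one_lt_pow₀ hgt hn.ne'
    have hℓ : (1:ℝ) ≤ (ℓ:ℝ)^(m-1) :=
      one_le_pow₀ (by exact_mod_cast h2)
    nlinarith
  obtain ⟨L0, hL0⟩ := Filter.eventually_atTop.1 hev
  set L := max L0 1 with hL_def
  have hL1 : 1 ≤ L := le_max_right _ _
  have hLψ : ∀ ℓ, L ≤ ℓ → ψ ℓ ≤ 1 := fun ℓ h => hL0 ℓ (le_trans (le_max_left _ _) h)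
  -- finiteness of bounded solutions
  have hbdd : ∀ (x : X) (M : ℕ),
      {qp : (Fin m → ℤ) × (Fin n → ℤ) |
        (Finset.univ.sup fun j => (qp.1 j).natAbs) < M ∧ qp ∈ sol x}.Finite := by
    intro x M
    have hQ : {q : Fin m → ℤ | (Finset.univ.sup fun j => (q j).natAbs) < M}.Finite := by
      apply Set.Finite.subset (Set.Finite.pi (fun _ : Fin m => Set.finite_Icc (-(M:ℤ)) M))
      intro q hq j _
      have hle : (q j).natAbs ≤ Finset.univ.sup (fun j => (q j).natAbs) :=
        Finset.le_sup (f := fun j => (q j).natAbs) (Finset.mem_univ j)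
      have hq' : (Finset.univ.sup fun j => (q j).natAbs) < M := hq
      simp only [Set.mem_Icc]
      omega
    apply Set.Finite.subset (Set.Finite.biUnion hQ (fun q _ =>
      (Set.finite_singleton q).prod
        (pfinite n (fun i => ∑ j, x.1 i j * q j) x.2
          (ψ (Finset.univ.sup fun j => (q j).natAbs)))))
    rintro ⟨q, p⟩ ⟨hlt, hcond⟩
    exact Set.mem_biUnion hlt (Set.mem_prod.2 ⟨rfl, hcond⟩)
  -- cubes
  set cube : ((Fin n → Fin m → ℤ) × (Fin n → ℤ)) → Set X := fun k =>
    {x | (∀ i j, x.1 i j ∈ Set.Ico (k.1 i j : ℝ) (k.1 i j + 1)) ∧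
         (∀ i, x.2 i ∈ Set.Ico (k.2 i : ℝ) (k.2 i + 1))} with hcube_def
  rw [MeasureTheory.ae_iff]
  have hcover : {x : X | ¬ (sol x).Finite} ⊆
      ⋃ k : (Fin n → Fin m → ℤ) × (Fin n → ℤ), ({x : X | ¬ (sol x).Finite} ∩ cube k) := by
    intro x hx
    refine Set.mem_iUnion.2 ⟨(fun i j => ⌊x.1 i j⌋, fun i => ⌊x.2 i⌋), hx, ?_, ?_⟩
    · exact fun i j => ⟨Int.floor_le _, Int.lt_floor_add_one _⟩
    · exact fun i => ⟨Int.floor_le _, Int.lt_floor_add_one _⟩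
  apply measure_mono_null hcover
  apply measure_iUnion_null
  intro k
  -- Borel–Cantelli on cube k
  set s : ℕ → Set X := fun ℓ =>
    {x | x ∈ cube k ∧ ∃ q : Fin m → ℤ,
      (Finset.univ.sup fun j => (q j).natAbs) = ℓ + L ∧
      ∃ p : Fin n → ℤ, ∀ i, |(∑ j, x.1 i j * q j) + p i - x.2 i| ≤ ψ (ℓ + L)} with hs_def
  have hvol : ∀ ℓ : ℕ, volume (s ℓ) ≤
      ENNReal.ofReal (((2*m*3^(m-1) : ℕ) : ℝ) * 8^n *
        (((ℓ+L : ℕ)) : ℝ)^(m-1) * ψ (ℓ+L)^n) := by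
    intro ℓ
    set r := ℓ + L with hr_def
    have hr1 : 1 ≤ r := by omega
    set shellF : Finset (Fin m → ℤ) :=
      (Fintype.piFinset fun _ : Fin m => Finset.Icc (-(r:ℤ)) r) \
      (Fintype.piFinset fun _ : Fin m => Finset.Icc (-(r:ℤ)+1) ((r:ℤ)-1)) with hshell_def
    have hsub : s ℓ ⊆ ⋃ q ∈ shellF,
        {x : X | (∀ i j, x.1 i j ∈ Set.Ico (k.1 i j : ℝ) (k.1 i j + 1)) ∧
          (∀ i, x.2 i ∈ Set.Ico (k.2 i : ℝ) (k.2 i + 1)) ∧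
          ∃ p : Fin n → ℤ, ∀ i, |(∑ j, x.1 i j * q j) + p i - x.2 i| ≤ ψ r} := by
      rintro x ⟨hcx, q, hq, p, hp⟩
      have hqmem : q ∈ shellF := by
        rw [hshell_def, Finset.mem_sdiff]
        constructor
        · rw [Fintype.mem_piFinset]
          intro j
          have hle : (q j).natAbs ≤ Finset.univ.sup (fun j => (q j).natAbs) :=
            Finset.le_sup (f := fun j => (q j).natAbs) (Finset.mem_univ j)
          rw [hq] at hle
          simp only [Finset.mem_Icc]
          omega
        · intro hmem
          rw [Fintype.mem_piFinset] at hmem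
          obtain ⟨j, -, hj⟩ := Finset.exists_mem_eq_sup (Finset.univ : Finset (Fin m))
            (Finset.univ_nonempty_iff.2 (Fin.pos_iff_nonempty.1 hm))
            (fun j => (q j).natAbs)
          have := hmem j
          rw [Finset.mem_Icc] at this
          rw [hq] at hj
          omega
      exact Set.mem_biUnion hqmem ⟨hcx.1, hcx.2, p, hp⟩
    have hψr0 : (0:ℝ) ≤ ψ r := (hψ r).le
    have hψr1 : ψ r ≤ 1 := hLψ r (by omega)
    calc volume (s ℓ) ≤ volume (⋃ q ∈ shellF,
          {x : X | (∀ i j, x.1 i j ∈ Set.Ico (k.1 i j : ℝ) (k.1 i j + 1)) ∧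
            (∀ i, x.2 i ∈ Set.Ico (k.2 i : ℝ) (k.2 i + 1)) ∧
            ∃ p : Fin n → ℤ, ∀ i, |(∑ j, x.1 i j * q j) + p i - x.2 i| ≤ ψ r}) :=
          measure_mono hsub
      _ ≤ ∑ q ∈ shellF, volume
          {x : X | (∀ i j, x.1 i j ∈ Set.Ico (k.1 i j : ℝ) (k.1 i j + 1)) ∧
            (∀ i, x.2 i ∈ Set.Ico (k.2 i : ℝ) (k.2 i + 1)) ∧
            ∃ p : Fin n → ℤ, ∀ i, |(∑ j, x.1 i j * q j) + p i - x.2 i| ≤ ψ r} :=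
          measure_biUnion_finset_le _ _
      _ ≤ ∑ _q ∈ shellF, ENNReal.ofReal (8 * ψ r) ^ n :=
          Finset.sum_le_sum fun q _ => volA m n q k.1 k.2 (ψ r) hψr0 hψr1
      _ = shellF.card • ENNReal.ofReal (8 * ψ r) ^ n := Finset.sum_const _
      _ ≤ ENNReal.ofReal (((2*m*3^(m-1) : ℕ) : ℝ) * 8^n * ((r:ℕ) : ℝ)^(m-1) * ψ r^n) := by
          rw [nsmul_eq_mul, ← ENNReal.ofReal_pow (by linarith), ← ENNReal.ofReal_natCast,
            ← ENNReal.ofReal_mul (Nat.cast_nonneg _)]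
          apply ENNReal.ofReal_le_ofReal
          have hcard : (shellF.card : ℝ) ≤ ((2*m*3^(m-1) * r^(m-1) : ℕ) : ℝ) :=
            Nat.cast_le.2 (by simpa [mul_assoc] using shell_card m r hr1)
          calc (shellF.card : ℝ) * (8 * ψ r)^n
              ≤ ((2*m*3^(m-1) * r^(m-1) : ℕ) : ℝ) * (8 * ψ r)^n := by
                apply mul_le_mul_of_nonneg_right hcard
                positivity
            _ = ((2*m*3^(m-1) : ℕ) : ℝ) * 8^n * ((r:ℕ) : ℝ)^(m-1) * ψ r^n := by
                push_cast
                ring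
  have htsum : (∑' ℓ : ℕ, volume (s ℓ)) ≠ ⊤ := by
    apply LT.lt.ne
    have hg_nonneg : ∀ ℓ : ℕ, (0:ℝ) ≤ ((2*m*3^(m-1) : ℕ) : ℝ) * 8^n *
        (((ℓ+L : ℕ)) : ℝ)^(m-1) * ψ (ℓ+L)^n := by
      intro ℓ
      have := (hψ (ℓ+L)).le
      positivity
    have hg_sum : Summable (fun ℓ : ℕ => ((2*m*3^(m-1) : ℕ) : ℝ) * 8^n *
        (((ℓ+L : ℕ)) : ℝ)^(m-1) * ψ (ℓ+L)^n) := by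
      have h1 : Summable (fun ℓ : ℕ => (((ℓ+L : ℕ)) : ℝ)^(m-1) * ψ (ℓ+L)^n) := by
        exact_mod_cast (summable_nat_add_iff L).2 hsum
      simpa [mul_assoc] using h1.mul_left (((2*m*3^(m-1) : ℕ) : ℝ) * 8^n)
    calc (∑' ℓ : ℕ, volume (s ℓ))
        ≤ ∑' ℓ : ℕ, ENNReal.ofReal (((2*m*3^(m-1) : ℕ) : ℝ) * 8^n *
          (((ℓ+L : ℕ)) : ℝ)^(m-1) * ψ (ℓ+L)^n) := ENNReal.tsum_le_tsum hvol
      _ = ENNReal.ofReal (∑' ℓ : ℕ, ((2*m*3^(m-1) : ℕ) : ℝ) * 8^n *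
          (((ℓ+L : ℕ)) : ℝ)^(m-1) * ψ (ℓ+L)^n) :=
          (ENNReal.ofReal_tsum_of_nonneg hg_nonneg hg_sum).symm
      _ < ⊤ := ENNReal.ofReal_lt_top
  have hbc := MeasureTheory.ae_eventually_notMem (μ := (volume : Measure X)) htsum
  rw [MeasureTheory.ae_iff] at hbc
  apply measure_mono_null _ hbc
  rintro x ⟨hnf, hcube⟩
  simp only [Set.mem_setOf_eq]
  intro hev2
  apply hnf
  obtain ⟨N, hN⟩ := Filter.eventually_atTop.1 hev2
  apply (hbdd x (N + L)).subset
  rintro ⟨q, p⟩ hqp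
  refine ⟨?_, hqp⟩
  by_contra hge
  push_neg at hge
  set r := Finset.univ.sup fun j => (q j).natAbs with hr_def
  have hrL : (r - L) + L = r := by omega
  have hx : x ∈ s (r - L) := by
    refine ⟨hcube, q, by omega, p, ?_⟩
    intro i
    rw [hrL]
    exact hqp i
  exact hN (r - L) (by omega) hx
end

section
/- The partial sums ∑_{j=1}^{ℓ} φ(j)/j are asymptotically equivalent to ℓ/ζ(2) as ℓ → ∞. -/
open Finset Filter Real ArithmeticFunction
open scoped ArithmeticFunction.Moebius

lemma hasSum_moebius_div_sq :
    HasSum (fun d : ℕ => (μ d : ℝ) / (d : ℝ) ^ 2) (6 / π ^ 2) := by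
  have h2 : (1 : ℝ) < (2 : ℂ).re := by norm_num
  have hsum := (ArithmeticFunction.LSeriesSummable_moebius_iff.mpr h2).hasSum
  have hval : LSeries (fun n => (μ n : ℂ)) 2 = 6 / (π : ℂ) ^ 2 := by
    have h1 := LSeries_zeta_mul_Lseries_moebius (s := 2) h2
    rw [LSeries_zeta_eq_riemannZeta h2, riemannZeta_two] at h1
    have hpi : ((π : ℂ)) ≠ 0 := by
      simpa using Real.pi_ne_zero
    field_simp at h1 ⊢
    linear_combination h1
  rw [← LSeries] at hsum
  rw [hval] at hsum
  have hterm : ∀ n : ℕ, LSeries.term (fun n => (μ n : ℂ)) 2 n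
      = (((μ n : ℝ) / (n : ℝ) ^ 2 : ℝ) : ℂ) := by
    intro n
    rcases eq_or_ne n 0 with rfl | hn
    · simp [LSeries.term]
    · rw [LSeries.term_of_ne_zero hn, Complex.cpow_two]
      push_cast
      ring
  rw [funext hterm] at hsum
  have : ((6 / π ^ 2 : ℝ) : ℂ) = 6 / (π : ℂ) ^ 2 := by push_cast; ring
  rw [← this] at hsum
  exact Complex.hasSum_ofReal.mp hsum

lemma totient_div_eq (n : ℕ) (hn : 1 ≤ n) :
    (Nat.totient n : ℝ) / n = ∑ d ∈ n.divisors, (μ d : ℝ) / d := by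
  have hinv := (sum_eq_iff_sum_mul_moebius_eq (R := ℝ)
      (f := fun n => (Nat.totient n : ℝ)) (g := fun n => (n : ℝ))).mp
    (fun m hm => by exact_mod_cast congrArg (Nat.cast (R := ℝ)) (Nat.sum_totient m)) n hn
  rw [← hinv, Nat.sum_divisorsAntidiagonal (f := fun d e => (μ d : ℝ) * e), Finset.sum_div]
  refine Finset.sum_congr rfl fun d hd => ?_
  obtain ⟨hdvd, hn0⟩ := Nat.mem_divisors.mp hd
  have hd0 : (d : ℝ) ≠ 0 := Nat.cast_ne_zero.mpr fun h => hn0 (by simpa [h] using hdvd)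
  have hn0' : (n : ℝ) ≠ 0 := Nat.cast_ne_zero.mpr hn0
  rw [Nat.cast_div hdvd hd0]
  field_simp

lemma swap_sum (ℓ : ℕ) :
    ∑ j ∈ Icc 1 ℓ, (Nat.totient j : ℝ) / j
      = ∑ d ∈ Icc 1 ℓ, ((μ d : ℝ) / d) * ((ℓ / d : ℕ) : ℝ) := by
  have h1 : ∀ j ∈ Icc 1 ℓ, (Nat.totient j : ℝ) / j
      = ∑ d ∈ (Icc 1 ℓ).filter (· ∣ j), (μ d : ℝ) / d := by
    intro j hj
    obtain ⟨hj1, hjℓ⟩ := Finset.mem_Icc.mp hj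
    rw [totient_div_eq j hj1]
    congr 1
    ext d
    simp only [Nat.mem_divisors, Finset.mem_filter, Finset.mem_Icc]
    constructor
    · rintro ⟨hd, hj0⟩
      have hd0 : d ≠ 0 := fun h => hj0 (by simpa [h] using hd)
      exact ⟨⟨Nat.one_le_iff_ne_zero.mpr hd0, le_trans (Nat.le_of_dvd (Nat.pos_of_ne_zero (by omega)) hd) hjℓ⟩, hd⟩
    · rintro ⟨_, hd⟩
      exact ⟨hd, by omega⟩
  rw [Finset.sum_congr rfl h1]
  simp_rw [Finset.sum_filter]
  rw [Finset.sum_comm]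
  refine Finset.sum_congr rfl fun d hd => ?_
  rw [← Finset.sum_filter]
  rw [Finset.sum_const, nsmul_eq_mul, mul_comm]
  congr 2
  have : Icc 1 ℓ = Ioc 0 ℓ := rfl
  rw [this, Nat.Ioc_filter_dvd_card_eq_div]

lemma err_bound (ℓ : ℕ) :
    |∑ j ∈ Icc 1 ℓ, (Nat.totient j : ℝ) / j
      - (ℓ : ℝ) * ∑ d ∈ Icc 1 ℓ, (μ d : ℝ) / (d : ℝ) ^ 2| ≤ 1 + Real.log ℓ := by
  rw [swap_sum, Finset.mul_sum, ← Finset.sum_sub_distrib]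
  calc |∑ d ∈ Icc 1 ℓ, (((μ d : ℝ) / d) * ((ℓ / d : ℕ) : ℝ) - ℓ * ((μ d : ℝ) / (d:ℝ)^2))|
      ≤ ∑ d ∈ Icc 1 ℓ, |((μ d : ℝ) / d) * ((ℓ / d : ℕ) : ℝ) - ℓ * ((μ d : ℝ) / (d:ℝ)^2)| :=
        Finset.abs_sum_le_sum_abs _ _
    _ ≤ ∑ d ∈ Icc 1 ℓ, (d : ℝ)⁻¹ := by
        refine Finset.sum_le_sum fun d hd => ?_
        obtain ⟨hd1, hdℓ⟩ := Finset.mem_Icc.mp hd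
        have hd0 : (0:ℝ) < d := by exact_mod_cast hd1
        have key : ((μ d : ℝ) / d) * ((ℓ / d : ℕ) : ℝ) - ℓ * ((μ d : ℝ) / (d:ℝ)^2)
            = ((μ d : ℝ) / d) * (((ℓ / d : ℕ) : ℝ) - (ℓ:ℝ)/d) := by
          field_simp
        rw [key, abs_mul, abs_div]
        have hμ : |(μ d : ℝ)| ≤ 1 := by exact_mod_cast abs_moebius_le_one (n := d)
        have hflo : ((ℓ / d : ℕ) : ℝ) ≤ (ℓ:ℝ)/d := Nat.cast_div_le
        have hfhi : (ℓ:ℝ)/d ≤ ((ℓ / d : ℕ) : ℝ) + 1 := by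
          rw [div_le_iff₀ hd0]
          have h1 := Nat.div_add_mod ℓ d
          have h2 := Nat.mod_lt ℓ (show 0 < d by omega)
          have : ℓ < (ℓ / d + 1) * d := by nlinarith
          exact_mod_cast this.le
        have habs : |((ℓ / d : ℕ) : ℝ) - (ℓ:ℝ)/d| ≤ 1 := abs_le.mpr ⟨by linarith, by linarith⟩
        calc |(μ d : ℝ)| / |(d:ℝ)| * |((ℓ / d : ℕ) : ℝ) - (ℓ:ℝ)/d|
            ≤ 1 / (d:ℝ) * 1 := by
              apply mul_le_mul _ habs (abs_nonneg _) (by positivity)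
              rw [abs_of_pos hd0]
              gcongr
            _ = (d:ℝ)⁻¹ := by rw [mul_one, one_div]
    _ = (harmonic ℓ : ℝ) := by rw [harmonic_eq_sum_Icc]; push_cast; rfl
    _ ≤ 1 + Real.log ℓ := harmonic_le_one_add_log ℓ

/-- The partial sums ∑_{j=1}^{ℓ} φ(j)/j are asymptotically equivalent to ℓ/ζ(2),
where ζ(2) = π²/6. -/
theorem stmt12 :
    Filter.Tendsto (fun ℓ : ℕ =>
        (∑ j ∈ Finset.Icc 1 ℓ, (Nat.totient j : ℝ) / j) / ((ℓ : ℝ) / (Real.pi ^ 2 / 6)))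
      Filter.atTop (nhds 1) := by
  set f : ℕ → ℝ := fun d => (μ d : ℝ) / (d : ℝ) ^ 2 with hf
  set S : ℕ → ℝ := fun ℓ => ∑ j ∈ Icc 1 ℓ, (Nat.totient j : ℝ) / j with hSdef
  set P : ℕ → ℝ := fun ℓ => ∑ d ∈ Icc 1 ℓ, f d with hPdef
  have hIcc : ∀ ℓ : ℕ, P ℓ = ∑ d ∈ range (ℓ + 1), f d := by
    intro ℓ
    rw [hPdef, Finset.range_eq_Ico,
      ← Finset.sum_Ico_consecutive f (Nat.zero_le 1) (Nat.le_add_left 1 ℓ)]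
    have h0 : ∑ d ∈ Finset.Ico 0 1, f d = 0 := by simp [hf]
    rw [h0, zero_add, Finset.Ico_add_one_right_eq_Icc]
  have hP : Tendsto P atTop (nhds (6 / π ^ 2)) := by
    have := hasSum_moebius_div_sq.tendsto_sum_nat.comp (tendsto_add_atTop_nat 1)
    refine this.congr fun ℓ => (hIcc ℓ).symm
  have hE : Tendsto (fun ℓ : ℕ => (S ℓ - (ℓ : ℝ) * P ℓ) / ℓ) atTop (nhds 0) := by
    have hlog : Tendsto (fun ℓ : ℕ => (1 + Real.log ℓ) / ℓ) atTop (nhds 0) := by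
      have h1 : Tendsto (fun x : ℝ => (1 + Real.log x) / x) atTop (nhds 0) := by
        have hl : (fun x : ℝ => 1 + Real.log x) =o[atTop] id := by
          exact (Asymptotics.isLittleO_const_id_atTop 1).add Real.isLittleO_log_id_atTop
        simpa using hl.tendsto_div_nhds_zero
      exact h1.comp tendsto_natCast_atTop_atTop
    apply squeeze_zero_norm' _ hlog
    filter_upwards [eventually_ge_atTop 1] with ℓ hℓ
    have hℓ0 : (0:ℝ) < ℓ := by exact_mod_cast hℓ
    rw [Real.norm_eq_abs, abs_div, abs_of_pos hℓ0]
    exact div_le_div_of_nonneg_right (err_bound ℓ) hℓ0.le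
  have hS : Tendsto (fun ℓ : ℕ => S ℓ / ℓ) atTop (nhds (6 / π ^ 2)) := by
    have h := hP.add hE
    rw [add_zero] at h
    refine Tendsto.congr' ?_ h
    filter_upwards [eventually_ge_atTop 1] with ℓ hℓ
    have hℓ0 : (ℓ:ℝ) ≠ 0 := by positivity
    field_simp
    ring
  have heq : (fun ℓ : ℕ => S ℓ / ((ℓ : ℝ) / (π ^ 2 / 6)))
      = fun ℓ : ℕ => (S ℓ / ℓ) * (π ^ 2 / 6) := by
    funext ℓ
    rw [div_div_eq_mul_div, mul_comm, mul_div_assoc, mul_comm]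
  rw [show (fun ℓ : ℕ =>
        (∑ j ∈ Finset.Icc 1 ℓ, (Nat.totient j : ℝ) / j) / ((ℓ : ℝ) / (Real.pi ^ 2 / 6)))
      = fun ℓ : ℕ => S ℓ / ((ℓ : ℝ) / (π ^ 2 / 6)) from rfl, heq]
  have := hS.mul_const (π ^ 2 / 6)
  have hval : 6 / π ^ 2 * (π ^ 2 / 6) = 1 := by
    field_simp
  rwa [hval] at this
end
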